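/- arXiv:1708.08302 — 5 statements merged into one kernel-verified Lean document; each statement's English description precedes it below -/
import Mathlib

section
/- Let (T,A,μ) be a measure space and x, y measurable functions T → ℝ∪{±∞} with ∫_T x dμ < ∞ and ∫_T y dμ < ∞ (extended integrals). Then ∫_T (x + y) dμ = ∫_T x dμ + ∫_T y dμ, where sums of extended reals use the convention (-∞) + ∞ = ∞ + (-∞) := ∞. -/
open MeasureTheory ENNReal Filter Set Topology

/-- Positive part of an extended real, in `ℝ≥0∞`. -/
noncomputable def epos (a : EReal) : ℝ≥0∞ := if a = ⊤ then ⊤ else ENNReal.ofReal a.toReal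

/-- Extended integral `∫ f dμ := ∫ f₊ dμ - ∫ f₋ dμ` with the convention `∞ - ∞ := ∞`. -/
noncomputable def eintegral {T : Type*} [MeasurableSpace T] (μ : Measure T) (f : T → EReal) :
    EReal :=
  if (∫⁻ t, epos (f t) ∂μ) = ⊤ then ⊤
  else ((∫⁻ t, epos (f t) ∂μ : ℝ≥0∞) : EReal) - ((∫⁻ t, epos (- f t) ∂μ : ℝ≥0∞) : EReal)

/-- Addition of extended reals with the convention `(-∞) + ∞ = ∞ + (-∞) := ∞`. -/
noncomputable def eadd (a b : EReal) : EReal :=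
  if (a = ⊥ ∧ b = ⊤) ∨ (a = ⊤ ∧ b = ⊥) then ⊤ else a + b

/-- Subtraction of extended reals with the convention `∞ - ∞ := ∞`. -/
noncomputable def esub (a b : EReal) : EReal := eadd a (-b)

lemma epos_bot : epos ⊥ = 0 := by simp [epos]

lemma epos_top : epos ⊤ = ⊤ := by simp [epos]

lemma epos_coe (r : ℝ) : epos (r : EReal) = ENNReal.ofReal r := by simp [epos]

lemma epos_eq_top_iff {a : EReal} : epos a = ⊤ ↔ a = ⊤ := by
  induction a with
  | bot => simp [epos]
  | coe r => simp [epos]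
  | top => simp [epos]

lemma measurable_epos : Measurable epos := by
  have h : epos = fun a => if a ∈ ({⊤} : Set EReal) then ⊤ else ENNReal.ofReal a.toReal := by
    funext a; simp [epos]
  rw [h]
  exact Measurable.ite (measurableSet_singleton _) measurable_const
    (ENNReal.measurable_ofReal.comp measurable_ereal_toReal)

lemma ofReal_max0 (r : ℝ) : ENNReal.ofReal (max r 0) = ENNReal.ofReal r := by
  rcases le_total r 0 with h | h
  · simp [max_eq_right h, ENNReal.ofReal_of_nonpos h]
  · simp [max_eq_left h]

lemma epos_add_le {a b : EReal} (ha : a ≠ ⊤) (hb : b ≠ ⊤) :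
    epos (a + b) ≤ epos a + epos b := by
  induction a with
  | bot => simp [EReal.bot_add, epos_bot]
  | top => exact absurd rfl ha
  | coe r =>
    induction b with
    | bot => simp [EReal.add_bot, epos_bot]
    | top => exact absurd rfl hb
    | coe s =>
      rw [show ((r : EReal) + s) = ((r + s : ℝ) : EReal) by norm_cast]
      simp only [epos_coe]
      exact ENNReal.ofReal_add_le

lemma epos_neg_le {a b : EReal} (ha : a ≠ ⊤) (hb : b ≠ ⊤) :
    epos (-a) ≤ epos (-(a + b)) + epos b := by
  induction a with
  | bot => simp [EReal.bot_add, epos_top]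
  | top => exact absurd rfl ha
  | coe r =>
    induction b with
    | bot => simp [EReal.add_bot, epos_top]
    | top => exact absurd rfl hb
    | coe s =>
      rw [show ((r : EReal) + s) = ((r + s : ℝ) : EReal) by norm_cast,
        show (-((r + s : ℝ) : EReal)) = ((-(r + s) : ℝ) : EReal) by norm_cast,
        show (-(r : EReal)) = ((-r : ℝ) : EReal) by norm_cast]
      simp only [epos_coe]
      calc ENNReal.ofReal (-r) = ENNReal.ofReal (-(r + s) + s) := by ring_nf
        _ ≤ ENNReal.ofReal (-(r + s)) + ENNReal.ofReal s := ENNReal.ofReal_add_le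

lemma ofReal_add3 (a b c : ℝ) : ENNReal.ofReal a + ENNReal.ofReal b + ENNReal.ofReal c
    = ENNReal.ofReal (max a 0 + max b 0 + max c 0) := by
  rw [ENNReal.ofReal_add (add_nonneg (le_max_right a 0) (le_max_right b 0)) (le_max_right c 0),
    ENNReal.ofReal_add (le_max_right a 0) (le_max_right b 0), ofReal_max0, ofReal_max0,
    ofReal_max0]

lemma epos_add_identity (r s : ℝ) :
    epos ((r : EReal) + s) + epos (-((r : EReal))) + epos (-((s : EReal))) =
    epos (-((r : EReal) + s)) + epos (r : EReal) + epos (s : EReal) := by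
  rw [show ((r : EReal) + s) = ((r + s : ℝ) : EReal) by norm_cast,
    show (-((r + s : ℝ) : EReal)) = ((-(r + s) : ℝ) : EReal) by norm_cast,
    show (-(r : EReal)) = ((-r : ℝ) : EReal) by norm_cast,
    show (-(s : EReal)) = ((-s : ℝ) : EReal) by norm_cast]
  simp only [epos_coe]
  rw [ofReal_add3, ofReal_add3]
  congr 1
  simp only [max_def]
  split_ifs <;> linarith

lemma coe_ennreal_toReal' {P : ℝ≥0∞} (h : P ≠ ⊤) :
    ((P : ℝ≥0∞) : EReal) = ((P.toReal : ℝ) : EReal) := by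
  rw [← EReal.toReal_coe_ennreal (x := P), EReal.coe_toReal]
  · simpa using h
  · exact EReal.coe_ennreal_ne_bot P

lemma final_arith (pz nz px nx py ny : ℝ) (heq : pz + nx + ny = nz + px + py) :
    ((pz : EReal) - (nz : EReal)) = eadd ((px : EReal) - (nx : EReal)) ((py : EReal) - (ny : EReal)) := by
  rw [eadd, if_neg]
  · rw [← EReal.coe_sub, ← EReal.coe_sub, ← EReal.coe_sub, ← EReal.coe_add]
    norm_cast
    linarith
  · rintro (⟨h, _⟩ | ⟨h, _⟩) <;> rw [← EReal.coe_sub] at h <;>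
      [exact EReal.coe_ne_bot _ h; exact EReal.coe_ne_top _ h]

/-- Lemma 1(c): if both extended integrals are < infinity, the extended integral of the sum is
the sum (with the convention (-inf) + inf := inf). -/
theorem stmt_2 {T : Type*} [MeasurableSpace T] (μ : Measure T) (x y : T → EReal)
    (hx : Measurable x) (hy : Measurable y)
    (hxf : eintegral μ x < ⊤) (hyf : eintegral μ y < ⊤) :
    eintegral μ (fun t => eadd (x t) (y t)) = eadd (eintegral μ x) (eintegral μ y) := by
  set z : T → EReal := fun t => eadd (x t) (y t) with hzdef
  -- finiteness of positive parts
  have hPx : (∫⁻ t, epos (x t) ∂μ) ≠ ⊤ := by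
    intro h
    rw [eintegral, if_pos h] at hxf
    exact lt_irrefl _ hxf
  have hPy : (∫⁻ t, epos (y t) ∂μ) ≠ ⊤ := by
    intro h
    rw [eintegral, if_pos h] at hyf
    exact lt_irrefl _ hyf
  -- a.e. x, y not top
  have haex : ∀ᵐ t ∂μ, x t ≠ ⊤ := by
    filter_upwards [ae_lt_top (measurable_epos.comp hx) hPx] with t ht htop
    simp only [Function.comp_apply, htop, epos_top, lt_self_iff_false] at ht
  have haey : ∀ᵐ t ∂μ, y t ≠ ⊤ := by
    filter_upwards [ae_lt_top (measurable_epos.comp hy) hPy] with t ht htop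
    simp only [Function.comp_apply, htop, epos_top, lt_self_iff_false] at ht
  have haez : ∀ᵐ t ∂μ, z t = x t + y t := by
    filter_upwards [haex, haey] with t h1 h2
    rw [hzdef]
    simp only
    rw [eadd, if_neg]
    rintro (⟨_, h⟩ | ⟨h, _⟩)
    · exact h2 h
    · exact h1 h
  -- finiteness of positive part of z
  have hPz : (∫⁻ t, epos (z t) ∂μ) ≠ ⊤ := by
    have hle : (∫⁻ t, epos (z t) ∂μ) ≤ ∫⁻ t, (epos (x t) + epos (y t)) ∂μ := by
      apply lintegral_mono_ae
      filter_upwards [haez, haex, haey] with t h1 h2 h3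
      rw [h1]
      exact epos_add_le h2 h3
    rw [lintegral_add_left (show Measurable fun t => epos (x t) from measurable_epos.comp hx) _] at hle
    exact ne_top_of_le_ne_top (ENNReal.add_ne_top.mpr ⟨hPx, hPy⟩) hle
  have heyne : eintegral μ y ≠ ⊤ := hyf.ne
  have hexne : eintegral μ x ≠ ⊤ := hxf.ne
  by_cases hNx : (∫⁻ t, epos (-(x t)) ∂μ) = ⊤
  · -- x has infinite negative part: both sides are ⊥
    have hNz : (∫⁻ t, epos (-(z t)) ∂μ) = ⊤ := by
      have hle : (∫⁻ t, epos (-(x t)) ∂μ) ≤ ∫⁻ t, (epos (-(z t)) + epos (y t)) ∂μ := by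
        apply lintegral_mono_ae
        filter_upwards [haez, haex, haey] with t h1 h2 h3
        rw [h1]
        exact epos_neg_le h2 h3
      rw [lintegral_add_right _ (show Measurable fun t => epos (y t) from measurable_epos.comp hy), hNx] at hle
      rcases ENNReal.add_eq_top.mp (top_le_iff.mp hle) with h | h
      · exact h
      · exact absurd h hPy
    have hz' : eintegral μ z = ⊥ := by
      rw [eintegral, if_neg hPz, hNz, EReal.coe_ennreal_top, EReal.sub_top]
    have hx' : eintegral μ x = ⊥ := by
      rw [eintegral, if_neg hPx, hNx, EReal.coe_ennreal_top, EReal.sub_top]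
    rw [hz', hx', eadd, if_neg, EReal.bot_add]
    rintro (⟨_, h⟩ | ⟨h, _⟩)
    · exact heyne h
    · exact absurd h (by simp)
  · by_cases hNy : (∫⁻ t, epos (-(y t)) ∂μ) = ⊤
    · -- y has infinite negative part
      have hNz : (∫⁻ t, epos (-(z t)) ∂μ) = ⊤ := by
        have hle : (∫⁻ t, epos (-(y t)) ∂μ) ≤ ∫⁻ t, (epos (-(z t)) + epos (x t)) ∂μ := by
          apply lintegral_mono_ae
          filter_upwards [haez, haex, haey] with t h1 h2 h3
          rw [h1, add_comm (x t) (y t)]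
          exact epos_neg_le h3 h2
        rw [lintegral_add_right _ (show Measurable fun t => epos (x t) from measurable_epos.comp hx), hNy] at hle
        rcases ENNReal.add_eq_top.mp (top_le_iff.mp hle) with h | h
        · exact h
        · exact absurd h hPx
      have hz' : eintegral μ z = ⊥ := by
        rw [eintegral, if_neg hPz, hNz, EReal.coe_ennreal_top, EReal.sub_top]
      have hy' : eintegral μ y = ⊥ := by
        rw [eintegral, if_neg hPy, hNy, EReal.coe_ennreal_top, EReal.sub_top]
      rw [hz', hy', eadd, if_neg, EReal.add_bot]
      rintro (⟨_, h⟩ | ⟨h, _⟩)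
      · exact absurd h (by simp)
      · exact hexne h
    · -- main case: everything finite
      have haexb : ∀ᵐ t ∂μ, x t ≠ ⊥ := by
        filter_upwards [ae_lt_top (measurable_epos.comp hx.neg) hNx] with t ht hbot
        simp only [Function.comp_apply, hbot, epos_top, lt_self_iff_false,
          EReal.neg_bot, Pi.neg_apply] at ht
      have haeyb : ∀ᵐ t ∂μ, y t ≠ ⊥ := by
        filter_upwards [ae_lt_top (measurable_epos.comp hy.neg) hNy] with t ht hbot
        simp only [Function.comp_apply, hbot, epos_top, lt_self_iff_false,
          EReal.neg_bot, Pi.neg_apply] at ht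
      have hkey : ∀ᵐ t ∂μ, epos (z t) + epos (-(x t)) + epos (-(y t))
          = epos (-(z t)) + epos (x t) + epos (y t) := by
        filter_upwards [haez, haex, haey, haexb, haeyb] with t h1 h2 h3 h4 h5
        rw [h1, ← EReal.coe_toReal h2 h4, ← EReal.coe_toReal h3 h5]
        exact epos_add_identity _ _
      have hint : (∫⁻ t, epos (z t) ∂μ) + (∫⁻ t, epos (-(x t)) ∂μ) + (∫⁻ t, epos (-(y t)) ∂μ)
          = (∫⁻ t, epos (-(z t)) ∂μ) + (∫⁻ t, epos (x t) ∂μ) + (∫⁻ t, epos (y t) ∂μ) := by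
        have h := lintegral_congr_ae hkey
        rwa [lintegral_add_right _ (show Measurable fun t => epos (-(y t)) from measurable_epos.comp hy.neg),
          lintegral_add_right _ (show Measurable fun t => epos (-(x t)) from measurable_epos.comp hx.neg),
          lintegral_add_right _ (show Measurable fun t => epos (y t) from measurable_epos.comp hy),
          lintegral_add_right _ (show Measurable fun t => epos (x t) from measurable_epos.comp hx)] at h
      have hNz : (∫⁻ t, epos (-(z t)) ∂μ) ≠ ⊤ := by
        intro h
        apply ENNReal.add_ne_top.mpr ⟨ENNReal.add_ne_top.mpr ⟨hPz, hNx⟩, hNy⟩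
        rw [hint, h]
        simp
      have hreal : (∫⁻ t, epos (z t) ∂μ).toReal + (∫⁻ t, epos (-(x t)) ∂μ).toReal
            + (∫⁻ t, epos (-(y t)) ∂μ).toReal
          = (∫⁻ t, epos (-(z t)) ∂μ).toReal + (∫⁻ t, epos (x t) ∂μ).toReal
            + (∫⁻ t, epos (y t) ∂μ).toReal := by
        have h := congrArg ENNReal.toReal hint
        rwa [ENNReal.toReal_add (ENNReal.add_ne_top.mpr ⟨hPz, hNx⟩) hNy,
          ENNReal.toReal_add hPz hNx,
          ENNReal.toReal_add (ENNReal.add_ne_top.mpr ⟨hNz, hPx⟩) hPy,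
          ENNReal.toReal_add hNz hPx] at h
      rw [eintegral, eintegral, eintegral, if_neg hPz, if_neg hPx, if_neg hPy,
        coe_ennreal_toReal' hPz, coe_ennreal_toReal' hNz, coe_ennreal_toReal' hPx,
        coe_ennreal_toReal' hNx, coe_ennreal_toReal' hPy, coe_ennreal_toReal' hNy]
      exact final_arith _ _ _ _ _ _ hreal
end

section
/- Let φ ∈ Γ(ℝ) be strictly convex on its domain I with int I ≠ ∅ and differentiable on int I, and let Φ(x) := ∫_T φ∘x dμ. Let x̄, x be in the effective domain of Φ with Φ(x̄) ∈ ℝ and Φ(x) ∈ ℝ. Then the one-sided directional derivative Φ'(x̄; x - x̄) := lim_{s→0⁺} [Φ(x̄ + s(x - x̄)) - Φ(x̄)]/s exists in [-∞, ∞) and equals the extended integral ∫_T φ'(x̄(t))·(x(t) - x̄(t)) dμ(t); moreover Φ(x) - Φ(x̄) - Φ'(x̄; x - x̄) = ∫_T [φ(x(t)) - φ(x̄(t)) - φ'(x̄(t))(x(t) - x̄(t))] dμ(t) ≥ 0. -/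
open MeasureTheory ENNReal Filter Set Topology

/-- The integral functional Phi(x) := extended integral of phi(x(.)) with respect to mu. -/
noncomputable def Phi {T : Type*} [MeasurableSpace T] (μ : Measure T) (φ : ℝ → EReal)
    (x : T → ℝ) : EReal := eintegral μ (fun t => φ (x t))

lemma epos_coe_ennreal (p : ℝ≥0∞) : epos (p : EReal) = p := by
  cases p using ENNReal.recTopCoe with
  | top => simp [epos]
  | coe r => rw [epos]; rw [if_neg (by simp)]; rw [EReal.toReal_coe_ennreal]; simp

lemma epos_nonpos {a : EReal} (h : a ≤ 0) : epos a = 0 := by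
  unfold epos
  have : a ≠ ⊤ := by intro e; rw [e] at h; exact absurd h (by simp)
  rw [if_neg this]
  simp only [ENNReal.ofReal_eq_zero]
  by_cases hb : a = ⊥
  · simp [hb]
  · have := EReal.toReal_le_toReal h hb (by simp)
    simpa using this

lemma epos_mono {a b : EReal} (h : a ≤ b) : epos a ≤ epos b := by
  unfold epos
  by_cases hb : b = ⊤
  · simp [hb]
  · have ha : a ≠ ⊤ := fun e => hb (top_le_iff.1 (e ▸ h))
    rw [if_neg ha, if_neg hb]
    by_cases hab : a = ⊥
    · simp [hab]
    · exact ENNReal.ofReal_le_ofReal (EReal.toReal_le_toReal h hab hb)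

lemma epos_le_ofReal {a : EReal} {r : ℝ} (h : a ≤ (r : EReal)) : epos a ≤ ENNReal.ofReal r := by
  simpa [epos_coe] using epos_mono h

section EI
variable {T : Type*} [MeasurableSpace T] {μ : Measure T}

lemma eintegral_congr_ae {f g : T → EReal} (h : f =ᵐ[μ] g) :
    eintegral μ f = eintegral μ g := by
  have h1 : (∫⁻ t, epos (f t) ∂μ) = ∫⁻ t, epos (g t) ∂μ :=
    lintegral_congr_ae (h.mono fun t ht => by simp only [ht])
  have h2 : (∫⁻ t, epos (-f t) ∂μ) = ∫⁻ t, epos (-g t) ∂μ :=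
    lintegral_congr_ae (h.mono fun t ht => by simp only [ht])
  unfold eintegral; rw [h1, h2]

lemma lintegral_epos_coe_ne_top {k : T → ℝ} (hk : Integrable k μ) :
    (∫⁻ t, epos ((k t : EReal)) ∂μ) ≠ ⊤ := by
  have hb : (∫⁻ t, epos ((k t : EReal)) ∂μ) ≤ ∫⁻ t, (‖k t‖₊ : ℝ≥0∞) ∂μ := by
    apply lintegral_mono
    intro t
    dsimp only
    rw [epos_coe, ← enorm_eq_nnnorm, ← ofReal_norm]
    exact ENNReal.ofReal_le_ofReal (le_abs_self _)
  exact ne_top_of_le_ne_top hk.hasFiniteIntegral.ne hb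

lemma ereal_coe_toReal_ennreal {p : ℝ≥0∞} (hp : p ≠ (⊤ : ℝ≥0∞)) : ((ENNReal.toReal p : ℝ) : EReal) = (p : EReal) := by
  cases p using ENNReal.recTopCoe with
  | top => exact absurd rfl hp
  | coe r => rw [ENNReal.coe_toReal]; rfl

lemma eintegral_coe_real {k : T → ℝ} (hk : Integrable k μ) :
    eintegral μ (fun t => (k t : EReal)) = ((∫ t, k t ∂μ : ℝ) : EReal) := by
  have hP := lintegral_epos_coe_ne_top hk
  have hN := lintegral_epos_coe_ne_top hk.neg
  simp only [Pi.neg_apply] at hN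
  rw [eintegral, if_neg hP]
  have e1 : ∀ t, epos (-(k t : EReal)) = epos (((-k t : ℝ) : EReal)) := by
    intro t; rw [EReal.coe_neg]
  simp only [e1]
  rw [integral_eq_lintegral_pos_part_sub_lintegral_neg_part hk, EReal.coe_sub]
  simp only [epos_coe] at hP hN ⊢
  rw [ereal_coe_toReal_ennreal hP, ereal_coe_toReal_ennreal hN]

lemma eintegral_coe_ennreal {c : T → ℝ≥0∞} :
    eintegral μ (fun t => ((c t : EReal))) = ((∫⁻ t, c t ∂μ : ℝ≥0∞) : EReal) := by
  have e1 : ∀ t, epos ((c t : EReal)) = c t := fun t => epos_coe_ennreal _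
  have e2 : ∀ t, epos (-(c t : EReal)) = 0 := by
    intro t
    apply epos_nonpos
    rw [show (0:EReal) = -0 by simp, EReal.neg_le_neg_iff]
    exact EReal.coe_ennreal_nonneg _
  rw [eintegral]
  simp only [e1, e2, lintegral_zero]
  by_cases h : (∫⁻ t, c t ∂μ) = ⊤
  · rw [if_pos h, h, EReal.coe_ennreal_top]
  · rw [if_neg h]
    simp

lemma ofReal_max_zero (a : ℝ) : ENNReal.ofReal (max a 0) = ENNReal.ofReal a := by
  rcases le_total a 0 with h|h
  · rw [max_eq_right h, ENNReal.ofReal_zero, eq_comm, ENNReal.ofReal_eq_zero.2 h]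
  · rw [max_eq_left h]

lemma lintegral_epos_ne_top_of_le {f : T → EReal} {g : T → ℝ} (h : ∀ᵐ t ∂μ, f t ≤ (g t : EReal))
    (hg : Integrable g μ) : (∫⁻ t, epos (f t) ∂μ) ≠ ⊤ := by
  have hb : (∫⁻ t, epos (f t) ∂μ) ≤ ∫⁻ t, (‖g t‖₊ : ℝ≥0∞) ∂μ := by
    apply lintegral_mono_ae
    filter_upwards [h] with t ht
    calc epos (f t) ≤ ENNReal.ofReal (g t) := epos_le_ofReal ht
    _ ≤ _ := by
        rw [← enorm_eq_nnnorm, ← ofReal_norm]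
        exact ENNReal.ofReal_le_ofReal (le_abs_self _)
  exact ne_top_of_le_ne_top hg.hasFiniteIntegral.ne hb

lemma eintegral_sub_ennreal {g : T → ℝ} (hg : Integrable g μ) {c : T → ℝ≥0∞}
    (hc : AEMeasurable c μ) :
    eintegral μ (fun t => (g t : EReal) - (c t : EReal)) =
      ((∫ t, g t ∂μ : ℝ) : EReal) - ((∫⁻ t, c t ∂μ : ℝ≥0∞) : EReal) := by
  have hle : ∀ t, (g t : EReal) - (c t : EReal) ≤ (g t : EReal) := by
    intro t
    have h1 : -(c t : EReal) ≤ 0 := by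
      rw [show (0:EReal) = -0 by simp, EReal.neg_le_neg_iff]
      exact EReal.coe_ennreal_nonneg _
    calc (g t : EReal) + (-(c t : EReal)) ≤ (g t : EReal) + 0 := add_le_add_right h1 _
    _ = (g t : EReal) := add_zero _
  have hPfin := lintegral_epos_ne_top_of_le (f := fun t => (g t : EReal) - (c t : EReal))
    (Filter.Eventually.of_forall hle) hg
  rw [eintegral, if_neg hPfin]
  by_cases htop : (∫⁻ t, c t ∂μ) = ⊤
  · have hneg : (∫⁻ t, epos (-((g t : EReal) - (c t : EReal))) ∂μ) = ⊤ := by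
      have key : ∀ t, c t ≤ epos (-((g t : EReal) - (c t : EReal))) + ENNReal.ofReal (g t) := by
        intro t
        cases hct : c t using ENNReal.recTopCoe with
        | top =>
          have : (g t : EReal) - ((⊤ : ℝ≥0∞) : EReal) = ⊥ := by
            rw [EReal.coe_ennreal_top]; exact EReal.sub_top _
          rw [this]
          simp [epos_top]
        | coe p =>
          have hfin : ((p : ℝ≥0∞) : EReal) = ((p : ℝ) : EReal) := by
            rw [← ereal_coe_toReal_ennreal (p := (p:ℝ≥0∞)) (by simp)]
            rw [ENNReal.coe_toReal]
          rw [hfin, ← EReal.coe_sub, ← EReal.coe_neg, epos_coe]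
          have hr : (p : ℝ) ≤ max (-(g t - (p:ℝ))) 0 + max (g t) 0 := by
            rcases le_total (g t) (p:ℝ) with h|h
            · have : (p:ℝ) ≤ -(g t - p) + max (g t) 0 := by
                rcases le_total (g t) 0 with h2|h2
                · rw [max_eq_right h2]; linarith
                · rw [max_eq_left h2]; linarith
              exact this.trans (by gcongr; exact le_max_left _ _)
            · calc (p:ℝ) ≤ max (g t) 0 := le_trans h (le_max_left _ _)
              _ ≤ _ := le_add_of_nonneg_left (le_max_right _ _)
          calc (p : ℝ≥0∞) = ENNReal.ofReal (p:ℝ) := by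
                rw [ENNReal.ofReal_coe_nnreal]
          _ ≤ ENNReal.ofReal (max (-(g t - (p:ℝ))) 0 + max (g t) 0) :=
                ENNReal.ofReal_le_ofReal hr
          _ = ENNReal.ofReal (max (-(g t - (p:ℝ))) 0) + ENNReal.ofReal (max (g t) 0) :=
                ENNReal.ofReal_add (le_max_right _ _) (le_max_right _ _)
          _ = _ := by rw [ofReal_max_zero, ofReal_max_zero]
      have hmeas : AEMeasurable (fun t => ENNReal.ofReal (g t)) μ :=
        ENNReal.measurable_ofReal.comp_aemeasurable hg.aemeasurable
      have h1 : (∫⁻ t, c t ∂μ) ≤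
          (∫⁻ t, epos (-((g t : EReal) - (c t : EReal))) ∂μ) + ∫⁻ t, ENNReal.ofReal (g t) ∂μ := by
        rw [← lintegral_add_right' _ hmeas]
        exact lintegral_mono key
      rw [htop] at h1
      have h2 : (∫⁻ t, ENNReal.ofReal (g t) ∂μ) ≠ ⊤ := by
        have := lintegral_epos_ne_top_of_le (f := fun t => (g t : EReal))
          (Filter.Eventually.of_forall (fun t => le_refl _)) hg
        simpa [epos_coe] using this
      by_contra hne
      have := ENNReal.add_lt_top.2 ⟨lt_top_iff_ne_top.2 hne, lt_top_iff_ne_top.2 h2⟩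
      exact absurd (top_le_iff.1 h1) this.ne
    rw [hneg, htop, EReal.coe_ennreal_top, EReal.sub_top, EReal.sub_top]
  · have hae : ∀ᵐ t ∂μ, c t < ⊤ := ae_lt_top' hc htop
    have hctr : Integrable (fun t => (c t).toReal) μ :=
      integrable_toReal_of_lintegral_ne_top hc htop
    have heq : (fun t => (g t : EReal) - (c t : EReal)) =ᵐ[μ]
        (fun t => ((g t - (c t).toReal : ℝ) : EReal)) := by
      filter_upwards [hae] with t ht
      rw [EReal.coe_sub, ← ereal_coe_toReal_ennreal ht.ne]
    have := eintegral_congr_ae heq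
    rw [eintegral, if_neg hPfin] at this
    have hk : Integrable (fun t => g t - (c t).toReal) μ := hg.sub hctr
    rw [this, eintegral_coe_real hk, integral_sub hg hctr,
      integral_toReal hc hae, EReal.coe_sub, ereal_coe_toReal_ennreal htop]

lemma ereal_sub_zero (a : EReal) : a - 0 = a := by
  rw [sub_eq_add_neg, neg_zero, add_zero]

lemma eintegral_nonneg_eq {f : T → EReal} (h : ∀ᵐ t ∂μ, 0 ≤ f t) :
    eintegral μ f = ((∫⁻ t, epos (f t) ∂μ : ℝ≥0∞) : EReal) := by
  rw [eintegral]
  by_cases htop : (∫⁻ t, epos (f t) ∂μ) = ⊤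
  · rw [if_pos htop, htop, EReal.coe_ennreal_top]
  · rw [if_neg htop]
    have hneg : (∫⁻ t, epos (-f t) ∂μ) = 0 := by
      rw [← lintegral_zero (μ := μ)]
      apply lintegral_congr_ae
      filter_upwards [h] with t ht
      apply epos_nonpos
      rw [show (0:EReal) = -0 by simp, EReal.neg_le_neg_iff]
      exact ht
    rw [hneg, EReal.coe_ennreal_zero, ereal_sub_zero]

lemma fin_of_eintegral_real {f : T → EReal} (hf : Measurable f) (hb : ∀ t, f t ≠ ⊥)
    (h : ∃ r : ℝ, eintegral μ f = (r : EReal)) :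
    Integrable (fun t => (f t).toReal) μ ∧ (∀ᵐ t ∂μ, f t ≠ ⊤) ∧
      eintegral μ f = ((∫ t, (f t).toReal ∂μ : ℝ) : EReal) := by
  obtain ⟨r, hr⟩ := h
  rw [eintegral] at hr
  have hP : (∫⁻ t, epos (f t) ∂μ) ≠ ⊤ := by
    intro e; rw [if_pos e] at hr; exact (EReal.coe_ne_top r) hr.symm
  rw [if_neg hP] at hr
  have hN : (∫⁻ t, epos (-f t) ∂μ) ≠ ⊤ := by
    intro e
    rw [e, EReal.coe_ennreal_top, EReal.sub_top] at hr
    exact (EReal.coe_ne_bot r) hr.symm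
  have hmP : Measurable fun t => epos (f t) := measurable_epos.comp hf
  have hmN : Measurable fun t => epos (-f t) := measurable_epos.comp hf.neg
  have haetop : ∀ᵐ t ∂μ, f t ≠ ⊤ := by
    filter_upwards [ae_lt_top hmP hP] with t ht
    intro e
    rw [e, epos_top] at ht
    exact absurd ht (lt_irrefl _)
  have hint : Integrable (fun t => (f t).toReal) μ := by
    constructor
    · exact (measurable_ereal_toReal.comp hf).aestronglyMeasurable
    · rw [HasFiniteIntegral]
      have hae : (fun t => (‖(f t).toReal‖₊ : ℝ≥0∞)) =ᵐ[μ]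
          (fun t => epos (f t) + epos (-f t)) := by
        filter_upwards [haetop] with t ht
        have hc := EReal.coe_toReal ht (hb t)
        set a := (f t).toReal
        rw [← hc, ← EReal.coe_neg, epos_coe, epos_coe, ← enorm_eq_nnnorm, ← ofReal_norm]
        rcases le_total a 0 with h2|h2
        · rw [Real.norm_eq_abs, abs_of_nonpos h2, ENNReal.ofReal_eq_zero.2 h2, zero_add]
        · rw [Real.norm_eq_abs, abs_of_nonneg h2,
            ENNReal.ofReal_eq_zero.2 (neg_nonpos.2 h2), add_zero]
      rw [show (∫⁻ a, ‖(f a).toReal‖ₑ ∂μ) = ∫⁻ a, (‖(f a).toReal‖₊ : ℝ≥0∞) ∂μ from rfl,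
        lintegral_congr_ae hae, lintegral_add_left hmP]
      exact ENNReal.add_lt_top.2 ⟨lt_top_iff_ne_top.2 hP, lt_top_iff_ne_top.2 hN⟩
  refine ⟨hint, haetop, ?_⟩
  have heq : f =ᵐ[μ] (fun t => (((f t).toReal : ℝ) : EReal)) := by
    filter_upwards [haetop] with t ht
    rw [EReal.coe_toReal ht (hb t)]
  rw [eintegral_congr_ae heq, eintegral_coe_real hint]

end EI

lemma ereal_sub_sub (a : ℝ) (b : EReal) : (a : EReal) - ((a : EReal) - b) = b := by
  induction b using EReal.rec with
  | bot => rw [EReal.sub_bot (by simp), EReal.sub_top]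
  | coe b => rw [← EReal.coe_sub, ← EReal.coe_sub]; norm_num
  | top => rw [EReal.sub_top, EReal.coe_sub_bot]

lemma ereal_coe_ofReal {r : ℝ} (hr : 0 ≤ r) : ((ENNReal.ofReal r : ℝ≥0∞) : EReal) = (r : EReal) := by
  rw [EReal.coe_ennreal_ofReal, max_eq_left hr]

lemma ereal_tendsto_const_sub {α : Type*} {l : Filter α} {f : α → EReal} {y : EReal} (a : ℝ)
    (hf : Tendsto f l (𝓝 y)) : Tendsto (fun s => (a : EReal) - f s) l (𝓝 ((a : EReal) - y)) := by
  have hneg : Tendsto (fun s => -f s) l (𝓝 (-y)) := hf.neg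
  have hadd : ContinuousAt (fun p : EReal × EReal => p.1 + p.2) (((a : ℝ) : EReal), -y) :=
    EReal.continuousAt_add (Or.inl (by simp)) (Or.inl (by simp))
  have := hadd.tendsto.comp ((tendsto_const_nhds.prodMk hneg).mono_right (nhds_prod_eq (x := ((a : ℝ) : EReal)) (y := -y)).ge)
  simp only [sub_eq_add_neg]; exact this

section Conv
variable {φ : ℝ → EReal}

lemma phi_seg (hbot : ∀ u, φ u ≠ ⊥)
    (hconv : ∀ u v a b : ℝ, 0 ≤ a → 0 ≤ b → a + b = 1 →
      φ (a * u + b * v) ≤ (a : EReal) * φ u + (b : EReal) * φ v)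
    {u v : ℝ} (hu : φ u ≠ ⊤) (hv : φ v ≠ ⊤) {s : ℝ} (hs0 : 0 < s) (hs1 : s ≤ 1) :
    φ (u + s * (v - u)) ≠ ⊤ ∧
      (φ (u + s * (v - u))).toReal ≤ (1 - s) * (φ u).toReal + s * (φ v).toReal := by
  have harg : (1 - s) * u + s * v = u + s * (v - u) := by ring
  have h1 := hconv u v (1 - s) s (by linarith) hs0.le (by ring)
  rw [harg, ← EReal.coe_toReal hu (hbot u), ← EReal.coe_toReal hv (hbot v),
    ← EReal.coe_mul, ← EReal.coe_mul, ← EReal.coe_add] at h1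
  refine ⟨fun e => EReal.coe_ne_top _ (top_le_iff.1 (e ▸ h1)), ?_⟩
  have h2 := EReal.toReal_le_toReal h1 (hbot _) (EReal.coe_ne_top _)
  rwa [EReal.toReal_coe] at h2

lemma quot_mono (hbot : ∀ u, φ u ≠ ⊥)
    (hconv : ∀ u v a b : ℝ, 0 ≤ a → 0 ≤ b → a + b = 1 →
      φ (a * u + b * v) ≤ (a : EReal) * φ u + (b : EReal) * φ v)
    {u v : ℝ} (hu : φ u ≠ ⊤) (hv : φ v ≠ ⊤) {s s' : ℝ} (hs0 : 0 < s) (hss : s ≤ s')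
    (hs1 : s' ≤ 1) :
    ((φ (u + s * (v - u))).toReal - (φ u).toReal) / s ≤
      ((φ (u + s' * (v - u))).toReal - (φ u).toReal) / s' := by
  have hs'0 : 0 < s' := lt_of_lt_of_le hs0 hss
  have hw := (phi_seg hbot hconv hu hv hs'0 hs1).1
  set w := u + s' * (v - u) with hwdef
  have harg : (1 - s / s') * u + (s / s') * w = u + s * (v - u) := by
    rw [hwdef]; field_simp; ring
  have hd0 : 0 ≤ s / s' := div_nonneg hs0.le hs'0.le
  have hd1 : s / s' ≤ 1 := (div_le_one hs'0).2 hss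
  have h1 := hconv u w (1 - s / s') (s / s') (by linarith) hd0 (by ring)
  rw [harg, ← EReal.coe_toReal hu (hbot u), ← EReal.coe_toReal hw (hbot w),
    ← EReal.coe_mul, ← EReal.coe_mul, ← EReal.coe_add] at h1
  have h2 := EReal.toReal_le_toReal h1 (hbot _) (EReal.coe_ne_top _)
  rw [EReal.toReal_coe] at h2
  set Cs := (φ (u + s * (v - u))).toReal
  set C' := (φ w).toReal
  set A := (φ u).toReal
  have h2' : Cs - A ≤ (s / s') * (C' - A) := by
    have : (1 - s / s') * A + (s / s') * C' = A + (s / s') * (C' - A) := by ring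
    linarith [h2, this.le]
  rw [div_le_div_iff₀ hs0 hs'0]
  calc (Cs - A) * s' ≤ ((s / s') * (C' - A)) * s' :=
        mul_le_mul_of_nonneg_right h2' hs'0.le
  _ = (C' - A) * s := by field_simp

lemma quot_le_chord (hbot : ∀ u, φ u ≠ ⊥)
    (hconv : ∀ u v a b : ℝ, 0 ≤ a → 0 ≤ b → a + b = 1 →
      φ (a * u + b * v) ≤ (a : EReal) * φ u + (b : EReal) * φ v)
    {u v : ℝ} (hu : φ u ≠ ⊤) (hv : φ v ≠ ⊤) {s : ℝ} (hs0 : 0 < s) (hs1 : s ≤ 1) :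
    ((φ (u + s * (v - u))).toReal - (φ u).toReal) / s ≤ (φ v).toReal - (φ u).toReal := by
  have h := quot_mono hbot hconv hu hv hs0 hs1 le_rfl
  have harg : u + 1 * (v - u) = v := by ring
  rwa [harg, div_one] at h

end Conv

/-- Directional derivative formula: if `Φ(x̄), Φ(x) ∈ ℝ`, then the one-sided directional
derivative `Φ'(x̄; x - x̄)` exists in `[-∞, ∞)`, equals the extended integral of
`φ'(x̄(t))·(x(t) - x̄(t))`, and `Φ(x) - Φ(x̄) - Φ'(x̄; x - x̄) ≥ 0`. The function `dphi` encodes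
the derivative of `φ` (one-sided, possibly infinite, at finite endpoints of the domain), via the
convergence of directional difference quotients. -/
theorem stmt_8 {T : Type*} [MeasurableSpace T] (μ : Measure T) (φ : ℝ → EReal)
    (hbot : ∀ u, φ u ≠ ⊥) (hproper : ∃ u, φ u ≠ ⊤) (hlsc : LowerSemicontinuous φ)
    (hconv : ∀ u v a b : ℝ, 0 ≤ a → 0 ≤ b → a + b = 1 →
      φ (a * u + b * v) ≤ (a : EReal) * φ u + (b : EReal) * φ v)
    (hstrict : ∀ u v : ℝ, φ u ≠ ⊤ → φ v ≠ ⊤ → u ≠ v → ∀ a b : ℝ, 0 < a → 0 < b → a + b = 1 →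
      φ (a * u + b * v) < (a : EReal) * φ u + (b : EReal) * φ v)
    (hint : (interior {u : ℝ | φ u ≠ ⊤}).Nonempty)
    (dphi : ℝ → EReal)
    (hdphi : ∀ u v : ℝ, φ u ≠ ⊤ → φ v ≠ ⊤ →
      Tendsto (fun s : ℝ => ((((φ (u + s * (v - u))).toReal - (φ u).toReal) / s : ℝ) : EReal))
        (𝓝[>] (0 : ℝ)) (𝓝 (dphi u * ((v : EReal) - (u : EReal)))))
    (X : Subspace ℝ (T → ℝ)) (hX : ∀ x ∈ X, Measurable x)
    (xb x : T → ℝ) (hxb : xb ∈ X) (hx : x ∈ X)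
    (hPhib : ∃ r : ℝ, Phi μ φ xb = (r : EReal)) (hPhix : ∃ r : ℝ, Phi μ φ x = (r : EReal)) :
    Tendsto (fun s : ℝ => (Phi μ φ (xb + s • (x - xb)) - Phi μ φ xb) * ((s⁻¹ : ℝ) : EReal))
        (𝓝[>] (0 : ℝ))
        (𝓝 (eintegral μ (fun t => dphi (xb t) * ((x t : EReal) - (xb t : EReal))))) ∧
      eintegral μ (fun t => dphi (xb t) * ((x t : EReal) - (xb t : EReal))) < ⊤ ∧
      Phi μ φ x - Phi μ φ xb -
          eintegral μ (fun t => dphi (xb t) * ((x t : EReal) - (xb t : EReal))) =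
        eintegral μ
          (fun t => φ (x t) - φ (xb t) - dphi (xb t) * ((x t : EReal) - (xb t : EReal))) ∧
      0 ≤ Phi μ φ x - Phi μ φ xb -
          eintegral μ (fun t => dphi (xb t) * ((x t : EReal) - (xb t : EReal))) := by
  classical
  have hxm : Measurable x := hX x hx
  have hxbm : Measurable xb := hX xb hxb
  have hφm : Measurable φ := hlsc.measurable
  obtain ⟨hIx, haex, hPx⟩ :=
    fin_of_eintegral_real (μ := μ) (f := fun t => φ (x t)) (hφm.comp hxm)
      (fun t => hbot _) hPhix
  obtain ⟨hIb, haeb, hPb⟩ :=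
    fin_of_eintegral_real (μ := μ) (f := fun t => φ (xb t)) (hφm.comp hxbm)
      (fun t => hbot _) hPhib
  set b0 : T → ℝ := fun t => (φ (xb t)).toReal with hb0def
  set b1 : T → ℝ := fun t => (φ (x t)).toReal with hb1def
  set h : T → ℝ := fun t => b1 t - b0 t with hhdef
  have hIh : Integrable h μ := hIx.sub hIb
  set H : ℝ := ∫ t, h t ∂μ with hHdef
  set θf : ℝ → T → ℝ :=
    fun s t => h t - ((φ (xb t + s * (x t - xb t))).toReal - b0 t) / s with hθdef
  set G : ℝ → ℝ≥0∞ := fun s => ∫⁻ t, ENNReal.ofReal (θf s t) ∂μ with hGdef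
  set sn : ℕ → ℝ := fun n => 1 / (n + 1) with hsndef
  set Θ : T → ℝ≥0∞ := fun t => ⨆ n, ENNReal.ofReal (θf (sn n) t) with hΘdef
  set L : ℝ≥0∞ := ∫⁻ t, Θ t ∂μ with hLdef
  set D : T → EReal := fun t => dphi (xb t) * ((x t : EReal) - (xb t : EReal)) with hDdef
  have hsn0 : ∀ n : ℕ, 0 < sn n := fun n => by positivity
  have hsn1 : ∀ n : ℕ, sn n ≤ 1 := by
    intro n
    rw [hsndef]
    rw [div_le_one (by positivity)]
    simp
  have hsnanti : ∀ n m : ℕ, n ≤ m → sn m ≤ sn n := by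
    intro n m hnm
    apply one_div_le_one_div_of_le (by positivity)
    have : (n : ℝ) ≤ m := Nat.cast_le.2 hnm
    linarith
  have hsn_tendsto : Tendsto sn atTop (𝓝[>] (0:ℝ)) := by
    rw [tendsto_nhdsWithin_iff]
    constructor
    · exact tendsto_one_div_add_atTop_nhds_zero_nat
    · exact Eventually.of_forall (fun n => hsn0 n)
  have hym : ∀ s : ℝ, Measurable fun t => xb t + s * (x t - xb t) :=
    fun s => hxbm.add ((hxm.sub hxbm).const_mul s)
  have hmθ : ∀ s : ℝ, Measurable (θf s) := by
    intro s
    apply Measurable.sub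
    · exact (measurable_ereal_toReal.comp (hφm.comp hxm)).sub
        (measurable_ereal_toReal.comp (hφm.comp hxbm))
    · apply Measurable.div_const
      exact (measurable_ereal_toReal.comp (hφm.comp (hym s))).sub
        (measurable_ereal_toReal.comp (hφm.comp hxbm))
  have hΘm : Measurable Θ :=
    Measurable.iSup (fun n => ENNReal.measurable_ofReal.comp (hmθ (sn n)))
  have hgood : ∀ᵐ t ∂μ, φ (xb t) ≠ ⊤ ∧ φ (x t) ≠ ⊤ := haeb.and haex
  have hθnn : ∀ᵐ t ∂μ, ∀ s : ℝ, 0 < s → s ≤ 1 → 0 ≤ θf s t := by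
    filter_upwards [hgood] with t ht s hs0 hs1
    have := quot_le_chord hbot hconv ht.1 ht.2 hs0 hs1
    simp only [hθdef, hhdef, hb0def, hb1def]
    linarith
  have hθmono : ∀ᵐ t ∂μ, ∀ s s' : ℝ, 0 < s → s ≤ s' → s' ≤ 1 → θf s' t ≤ θf s t := by
    filter_upwards [hgood] with t ht s s' hs0 hss hs1
    have := quot_mono hbot hconv ht.1 ht.2 hs0 hss hs1
    simp only [hθdef, hhdef, hb0def, hb1def]
    linarith
  have hGanti : ∀ s s' : ℝ, 0 < s → s ≤ s' → s' ≤ 1 → G s' ≤ G s := by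
    intro s s' hs0 hss hs1
    apply lintegral_mono_ae
    filter_upwards [hθmono] with t ht
    exact ENNReal.ofReal_le_ofReal (ht s s' hs0 hss hs1)
  have hmono_n : ∀ᵐ t ∂μ, Monotone fun n => ENNReal.ofReal (θf (sn n) t) := by
    filter_upwards [hθmono] with t ht n m hnm
    exact ENNReal.ofReal_le_ofReal (ht (sn m) (sn n) (hsn0 m) (hsnanti n m hnm) (hsn1 n))
  have hLsup : L = ⨆ n, G (sn n) := by
    rw [hLdef, hΘdef]
    exact lintegral_iSup' (fun n => (ENNReal.measurable_ofReal.comp (hmθ (sn n))).aemeasurable)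
      hmono_n
  have hkey : ∀ᵐ t ∂μ, ((Θ t : EReal) = (h t : EReal) - D t) := by
    filter_upwards [hgood, hθnn, hθmono] with t ht hnn hmono
    have hq := (hdphi (xb t) (x t) ht.1 ht.2).comp hsn_tendsto
    have hble : ∀ n : ℕ,
        ((((φ (xb t + sn n * (x t - xb t))).toReal - (φ (xb t)).toReal) / sn n : ℝ) : EReal)
          ≤ ((h t : ℝ) : EReal) := by
      intro n
      rw [EReal.coe_le_coe_iff]
      have := quot_le_chord hbot hconv ht.1 ht.2 (hsn0 n) (hsn1 n)
      simp only [hhdef, hb0def, hb1def]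
      linarith
    have h1 : Tendsto (fun n => ((θf (sn n) t : ℝ) : EReal)) atTop
        (𝓝 ((h t : EReal) - D t)) := by
      have h2 := ereal_tendsto_const_sub (h t) hq
      apply h2.congr
      intro n
      simp only [Function.comp, hθdef, EReal.coe_sub, hb0def]
    have h3 : Tendsto (fun n => ((ENNReal.ofReal (θf (sn n) t) : ℝ≥0∞) : EReal)) atTop
        (𝓝 ((Θ t : EReal))) := by
      apply (continuous_coe_ennreal_ereal.tendsto _).comp
      rw [hΘdef]
      exact tendsto_atTop_iSup (fun n m hnm =>
        ENNReal.ofReal_le_ofReal (hmono (sn m) (sn n) (hsn0 m) (hsnanti n m hnm) (hsn1 n)))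
    have h4 : (fun n => ((ENNReal.ofReal (θf (sn n) t) : ℝ≥0∞) : EReal))
        = fun n => ((θf (sn n) t : ℝ) : EReal) := by
      funext n
      exact ereal_coe_ofReal (hnn (sn n) (hsn0 n) (hsn1 n))
    rw [h4] at h3
    exact tendsto_nhds_unique h3 h1
  have hDeq : D =ᵐ[μ] fun t => (h t : EReal) - ((Θ t : ℝ≥0∞) : EReal) := by
    filter_upwards [hkey] with t ht
    rw [ht, ereal_sub_sub]
  have hED : eintegral μ D = ((H : ℝ) : EReal) - ((L : ℝ≥0∞) : EReal) := by
    rw [eintegral_congr_ae hDeq, eintegral_sub_ennreal hIh hΘm.aemeasurable, hHdef, hLdef]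
  -- quotient identity
  have hQ : ∀ s : ℝ, 0 < s → s < 1 →
      (Phi μ φ (xb + s • (x - xb)) - Phi μ φ xb) * ((s⁻¹ : ℝ) : EReal)
        = ((H : ℝ) : EReal) - ((G s : ℝ≥0∞) : EReal) := by
    intro s hs0 hs1
    have hys : ∀ t, (xb + s • (x - xb)) t = xb t + s * (x t - xb t) := by
      intro t
      simp [Pi.add_apply, Pi.smul_apply, Pi.sub_apply, smul_eq_mul]
    have hgs : Integrable (fun t => b0 t + s * h t) μ := hIb.add (hIh.const_mul s)
    have hfeq : (fun t => φ ((xb + s • (x - xb)) t)) =ᵐ[μ]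
        fun t => ((b0 t + s * h t : ℝ) : EReal)
          - ((ENNReal.ofReal (s * θf s t) : ℝ≥0∞) : EReal) := by
      filter_upwards [hgood, hθnn] with t ht hnn
      have hft := (phi_seg hbot hconv ht.1 ht.2 hs0 hs1.le).1
      have hnn' : 0 ≤ θf s t := hnn s hs0 hs1.le
      rw [hys t, ereal_coe_ofReal (mul_nonneg hs0.le hnn'), ← EReal.coe_sub,
        ← EReal.coe_toReal hft (hbot _)]
      congr 1
      simp only [hθdef, hhdef, hb0def, hb1def]
      field_simp
      ring
    have hcm : AEMeasurable (fun t => ENNReal.ofReal (s * θf s t)) μ :=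
      (ENNReal.measurable_ofReal.comp ((hmθ s).const_mul s)).aemeasurable
    have hPhis : Phi μ φ (xb + s • (x - xb)) =
        ((∫ t, (b0 t + s * h t) ∂μ : ℝ) : EReal)
          - ((∫⁻ t, ENNReal.ofReal (s * θf s t) ∂μ : ℝ≥0∞) : EReal) := by
      rw [Phi, eintegral_congr_ae hfeq, eintegral_sub_ennreal hgs hcm]
    have hint1 : (∫ t, (b0 t + s * h t) ∂μ : ℝ) = (∫ t, b0 t ∂μ) + s * H := by
      rw [integral_add hIb (hIh.const_mul s)]
      congr 1
      calc (∫ t, s * h t ∂μ) = ∫ t, s • h t ∂μ := by simp [smul_eq_mul]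
      _ = s • ∫ t, h t ∂μ := integral_smul s h
      _ = s * H := by rw [smul_eq_mul, hHdef]
    have hlin : (∫⁻ t, ENNReal.ofReal (s * θf s t) ∂μ) = ENNReal.ofReal s * G s := by
      have : ∀ t, ENNReal.ofReal (s * θf s t)
          = ENNReal.ofReal s * ENNReal.ofReal (θf s t) := by
        intro t; rw [ENNReal.ofReal_mul hs0.le]
      simp only [this]
      rw [lintegral_const_mul' _ _ ENNReal.ofReal_ne_top, hGdef]
    have hPb' : Phi μ φ xb = ((∫ t, b0 t ∂μ : ℝ) : EReal) := hPb
    rcases eq_or_ne (G s) ⊤ with hGs | hGs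
    · have htop : (∫⁻ t, ENNReal.ofReal (s * θf s t) ∂μ) = ⊤ := by
        rw [hlin, hGs, ENNReal.mul_top (by simp only [ne_eq, ENNReal.ofReal_eq_zero, not_le]; exact hs0)]
      rw [hPhis, htop, EReal.coe_ennreal_top, EReal.sub_top, hPb', EReal.bot_sub,
        EReal.bot_mul_coe_of_pos (inv_pos.2 hs0), hGs, EReal.coe_ennreal_top, EReal.sub_top]
    · have hfin : (ENNReal.ofReal s * G s) ≠ ⊤ := ENNReal.mul_ne_top ENNReal.ofReal_ne_top hGs
      have hcoe : ((ENNReal.ofReal s * G s : ℝ≥0∞) : EReal) = ((s * (G s).toReal : ℝ) : EReal) := by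
        rw [← ereal_coe_toReal_ennreal hfin, ENNReal.toReal_mul, ENNReal.toReal_ofReal hs0.le]
      rw [hPhis, hlin, hcoe, hint1, ← EReal.coe_sub, hPb', ← EReal.coe_sub, ← EReal.coe_mul,
        ← ereal_coe_toReal_ennreal hGs, ← EReal.coe_sub]
      congr 1
      field_simp
      ring
  -- tendsto of G
  have hGle : ∀ s : ℝ, 0 < s → s < 1 → G s ≤ L := by
    intro s hs0 hs1
    obtain ⟨n, hn⟩ := exists_nat_one_div_lt hs0
    have h1 : G s ≤ G (sn n) := by
      apply hGanti (sn n) s (hsn0 n) _ hs1.le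
      rw [hsndef]
      exact_mod_cast hn.le
    exact h1.trans (hLsup ▸ le_iSup (fun n => G (sn n)) n)
  have hGtendsto : Tendsto G (𝓝[>] (0:ℝ)) (𝓝 L) := by
    apply tendsto_order.2
    constructor
    · intro c hcL
      rw [hLsup] at hcL
      obtain ⟨n, hn⟩ := lt_iSup_iff.1 hcL
      have hmem : Ioo (0:ℝ) (sn n) ∈ 𝓝[>] (0:ℝ) :=
        Ioo_mem_nhdsGT_of_mem ⟨le_rfl, hsn0 n⟩
      filter_upwards [hmem] with s hs
      exact lt_of_lt_of_le hn (hGanti s (sn n) hs.1 hs.2.le (hsn1 n))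
    · intro c hLc
      have hmem : Ioo (0:ℝ) 1 ∈ 𝓝[>] (0:ℝ) := Ioo_mem_nhdsGT_of_mem ⟨le_rfl, one_pos⟩
      filter_upwards [hmem] with s hs
      exact lt_of_le_of_lt (hGle s hs.1 hs.2) hLc
  have hmain : Tendsto (fun s : ℝ => (Phi μ φ (xb + s • (x - xb)) - Phi μ φ xb)
      * ((s⁻¹ : ℝ) : EReal)) (𝓝[>] (0:ℝ)) (𝓝 (eintegral μ D)) := by
    rw [hED]
    have h1 : Tendsto (fun s : ℝ => ((H : ℝ) : EReal) - ((G s : ℝ≥0∞) : EReal))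
        (𝓝[>] (0:ℝ)) (𝓝 (((H : ℝ) : EReal) - ((L : ℝ≥0∞) : EReal))) :=
      ereal_tendsto_const_sub H ((continuous_coe_ennreal_ereal.tendsto L).comp hGtendsto)
    apply h1.congr'
    filter_upwards [Ioo_mem_nhdsGT_of_mem (show (0:ℝ) ∈ Ico (0:ℝ) 1 from ⟨le_rfl, one_pos⟩)]
      with s hs
    exact (hQ s hs.1 hs.2).symm
  refine ⟨hmain, ?_, ?_, ?_⟩
  · rw [hED]
    rcases eq_or_ne L ⊤ with hL | hL
    · rw [hL, EReal.coe_ennreal_top, EReal.sub_top]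
      exact bot_lt_top
    · rw [← ereal_coe_toReal_ennreal hL, ← EReal.coe_sub]
      exact EReal.coe_lt_top _
  · have hRHS : eintegral μ
        (fun t => φ (x t) - φ (xb t) - dphi (xb t) * ((x t : EReal) - (xb t : EReal)))
        = ((L : ℝ≥0∞) : EReal) := by
      have heq : (fun t => φ (x t) - φ (xb t) - dphi (xb t) * ((x t : EReal) - (xb t : EReal)))
          =ᵐ[μ] fun t => ((Θ t : ℝ≥0∞) : EReal) := by
        filter_upwards [hgood, hkey] with t ht hk
        rw [← EReal.coe_toReal ht.2 (hbot _), ← EReal.coe_toReal ht.1 (hbot _),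
          ← EReal.coe_sub, hk]
      rw [eintegral_congr_ae heq, eintegral_coe_ennreal, hLdef]
    have hPx' : Phi μ φ x = ((∫ t, b1 t ∂μ : ℝ) : EReal) := hPx
    have hPb'' : Phi μ φ xb = ((∫ t, b0 t ∂μ : ℝ) : EReal) := hPb
    rw [hRHS, hED, hPx', hPb'']
    have hH : H = (∫ t, b1 t ∂μ) - ∫ t, b0 t ∂μ := by
      rw [hHdef, hhdef]
      exact integral_sub hIx hIb
    rw [show ((∫ t, b1 t ∂μ : ℝ) : EReal) - ((∫ t, b0 t ∂μ : ℝ) : EReal) = ((H:ℝ) : EReal) by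
      rw [← EReal.coe_sub, hH]]
    exact ereal_sub_sub H _
  · have hPx' : Phi μ φ x = ((∫ t, b1 t ∂μ : ℝ) : EReal) := hPx
    have hPb'' : Phi μ φ xb = ((∫ t, b0 t ∂μ : ℝ) : EReal) := hPb
    rw [hED, hPx', hPb'']
    have hH : H = (∫ t, b1 t ∂μ) - ∫ t, b0 t ∂μ := by
      rw [hHdef, hhdef]
      exact integral_sub hIx hIb
    rw [show ((∫ t, b1 t ∂μ : ℝ) : EReal) - ((∫ t, b0 t ∂μ : ℝ) : EReal) = ((H:ℝ) : EReal) by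
      rw [← EReal.coe_sub, hH]]
    rw [ereal_sub_sub H]
    exact EReal.coe_ennreal_nonneg _
end

section
/- Lagrange multiplier sufficiency: let x̄ ∈ X ∩ F_b with Φ(x̄) ∈ ℝ. If there exist α₁,…,α_m ∈ ℝ such that φ'(x̄(t)) = α₁ψ₁(t) + … + α_mψ_m(t) for a.e. t ∈ T, then x̄ is an optimal solution of the entropy minimization problem (P). -/
open MeasureTheory ENNReal Filter Set Topology

/-- The feasible set of the entropy minimization problem: measurable `x` with `x·ψ_k ∈ L¹` and
`∫ x ψ_k dμ = b_k` for each `k`. -/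
def Feas {T : Type*} [MeasurableSpace T] (μ : Measure T) {m : ℕ} (ψ : Fin m → T → ℝ)
    (b : Fin m → ℝ) : Set (T → ℝ) :=
  {x : T → ℝ | Measurable x ∧ (∀ k, Integrable (fun t => x t * ψ k t) μ) ∧
    ∀ k, (∫ t, x t * ψ k t ∂μ) = b k}

lemma epos_eq_ofReal {a : EReal} (h : a ≠ ⊤) : epos a = ENNReal.ofReal a.toReal := if_neg h

lemma ennnorm_eq (r : ℝ) : (‖r‖₊ : ℝ≥0∞) = ENNReal.ofReal r + ENNReal.ofReal (-r) := by
  rcases le_total 0 r with h | h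
  · rw [ENNReal.ofReal_eq_zero.mpr (neg_nonpos.mpr h), add_zero, ← enorm_eq_nnnorm, Real.enorm_eq_ofReal h]
  · rw [ENNReal.ofReal_eq_zero.mpr h, zero_add, ← enorm_eq_nnnorm, ← enorm_neg,
      Real.enorm_eq_ofReal (neg_nonneg.mpr h)]

/-- gradient inequality -/
lemma gradIneq (φ : ℝ → EReal) (hbot : ∀ u, φ u ≠ ⊥)
    (hconv : ∀ u v a b' : ℝ, 0 ≤ a → 0 ≤ b' → a + b' = 1 →
      φ (a * u + b' * v) ≤ (a : EReal) * φ u + (b' : EReal) * φ v)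
    (dphi : ℝ → EReal)
    (hdphi : ∀ u v : ℝ, φ u ≠ ⊤ → φ v ≠ ⊤ →
      Tendsto (fun s : ℝ => ((((φ (u + s * (v - u))).toReal - (φ u).toReal) / s : ℝ) : EReal))
        (𝓝[>] (0 : ℝ)) (𝓝 (dphi u * ((v : EReal) - (u : EReal)))))
    (u v : ℝ) (hu : φ u ≠ ⊤) (hv : φ v ≠ ⊤) :
    dphi u * ((v : EReal) - (u : EReal)) ≤ (((φ v).toReal - (φ u).toReal : ℝ) : EReal) := by
  refine le_of_tendsto (hdphi u v hu hv) ?_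
  filter_upwards [Ioo_mem_nhdsGT_of_mem (show (0:ℝ) ∈ Ico (0:ℝ) 1 from ⟨le_rfl, zero_lt_one⟩)]
    with s hs
  set A := (φ u).toReal with hA
  set B := (φ v).toReal with hB
  have h1 := hconv u v (1 - s) s (by linarith [hs.2]) hs.1.le (by ring)
  rw [show (1 - s) * u + s * v = u + s * (v - u) by ring] at h1
  rw [show φ u = (A : EReal) from (EReal.coe_toReal hu (hbot u)).symm,
      show φ v = (B : EReal) from (EReal.coe_toReal hv (hbot v)).symm] at h1
  have h2 : ((1 - s : ℝ) : EReal) * (A : EReal) + (s : EReal) * (B : EReal)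
      = (((1 - s) * A + s * B : ℝ) : EReal) := by norm_cast
  rw [h2] at h1
  have hne : φ (u + s * (v - u)) ≠ ⊤ := ne_top_of_le_ne_top (EReal.coe_ne_top _) h1
  have h3 : (φ (u + s * (v - u))).toReal ≤ (1 - s) * A + s * B := by
    have := EReal.toReal_le_toReal h1 (hbot _) (EReal.coe_ne_top _)
    rwa [EReal.toReal_coe] at this
  have h4 : ((φ (u + s * (v - u))).toReal - A) / s ≤ B - A := by
    rw [div_le_iff₀ hs.1]
    nlinarith
  exact_mod_cast h4

lemma coe_ennreal_eq_coe (P : ℝ≥0∞) (h : P ≠ ⊤) : (P : EReal) = ((P.toReal : ℝ) : EReal) := by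
  conv_lhs => rw [← EReal.coe_toReal (x := (P : EReal))
    (by simpa [EReal.coe_ennreal_eq_top_iff] using h) (EReal.coe_ennreal_ne_bot P)]
  rw [EReal.toReal_coe_ennreal]

/-- Lagrange multiplier sufficiency: if `x̄` is feasible with `Φ(x̄) ∈ ℝ` and
`φ'(x̄(t)) = α₁ψ₁(t) + … + α_mψ_m(t)` a.e. for some real `α₁,…,α_m`, then `x̄` is an optimal
solution of (P). -/
theorem stmt_15 {T : Type*} [MeasurableSpace T] (μ : Measure T) (φ : ℝ → EReal)
(hbot : ∀ u, φ u ≠ ⊥) (hproper : ∃ u, φ u ≠ ⊤) (hlsc : LowerSemicontinuous φ)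
    (hconv : ∀ u v a b' : ℝ, 0 ≤ a → 0 ≤ b' → a + b' = 1 →
      φ (a * u + b' * v) ≤ (a : EReal) * φ u + (b' : EReal) * φ v)
    (hstrict : ∀ u v : ℝ, φ u ≠ ⊤ → φ v ≠ ⊤ → u ≠ v → ∀ a b' : ℝ, 0 < a → 0 < b' → a + b' = 1 →
      φ (a * u + b' * v) < (a : EReal) * φ u + (b' : EReal) * φ v)
    (hint : (interior {u : ℝ | φ u ≠ ⊤}).Nonempty)
(dphi : ℝ → EReal)
    (hdphi : ∀ u v : ℝ, φ u ≠ ⊤ → φ v ≠ ⊤ →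
      Tendsto (fun s : ℝ => ((((φ (u + s * (v - u))).toReal - (φ u).toReal) / s : ℝ) : EReal))
        (𝓝[>] (0 : ℝ)) (𝓝 (dphi u * ((v : EReal) - (u : EReal)))))
    (m : ℕ) (ψ : Fin m → T → ℝ) (hψ : ∀ k, Measurable (ψ k)) (b : Fin m → ℝ)
    (X : Subspace ℝ (T → ℝ)) (hX : ∀ x ∈ X, Measurable x)
    (xb : T → ℝ) (hxbX : xb ∈ X) (hxbF : xb ∈ Feas μ ψ b)
    (hfin : ∃ r : ℝ, Phi μ φ xb = (r : EReal))
    (α : Fin m → ℝ)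
    (hmult : ∀ᵐ t ∂μ, dphi (xb t) = ((∑ k, α k * ψ k t : ℝ) : EReal)) :
    ∀ x ∈ X, x ∈ Feas μ ψ b → Phi μ φ xb ≤ Phi μ φ x := by
  obtain ⟨r, hr⟩ := hfin
  intro x hxX hxF
  obtain ⟨hxm, hxI, hxeq⟩ := hxF
  obtain ⟨hbm, hbI, hbeq⟩ := hxbF
  have hφm : Measurable φ := hlsc.measurable
  have hfm : Measurable fun t => φ (x t) := hφm.comp hxm
  have hgm : Measurable fun t => φ (xb t) := hφm.comp (hX xb hxbX)
  by_cases hP : (∫⁻ t, epos (φ (x t)) ∂μ) = ⊤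
  · rw [hr, show Phi μ φ x = ⊤ by rw [Phi, eintegral, if_pos hP]]
    exact le_top
  -- finiteness facts for xb
  have hPb : (∫⁻ t, epos (φ (xb t)) ∂μ) ≠ ⊤ := by
    intro h
    rw [Phi, eintegral, if_pos h] at hr
    exact EReal.coe_ne_top r hr.symm
  have hNb : (∫⁻ t, epos (-(φ (xb t))) ∂μ) ≠ ⊤ := by
    intro h
    rw [Phi, eintegral, if_neg hPb] at hr
    rw [h, EReal.coe_ennreal_top, EReal.sub_top] at hr
    exact EReal.coe_ne_bot r hr.symm
  -- a.e. finiteness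
  have haefx : ∀ᵐ t ∂μ, φ (x t) ≠ ⊤ := by
    filter_upwards [ae_lt_top (measurable_epos.comp hfm) hP] with t ht
    intro h
    have ht' : epos (φ (x t)) < ⊤ := ht
    rw [h] at ht'; simp [epos] at ht'
  have haegx : ∀ᵐ t ∂μ, φ (xb t) ≠ ⊤ := by
    filter_upwards [ae_lt_top (measurable_epos.comp hgm) hPb] with t ht
    intro h
    have ht' : epos (φ (xb t)) < ⊤ := ht
    rw [h] at ht'; simp [epos] at ht'
  -- real-valued functions
  set ftr : T → ℝ := fun t => (φ (x t)).toReal with hftr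
  set gtr : T → ℝ := fun t => (φ (xb t)).toReal with hgtr
  set h0 : T → ℝ := fun t => (∑ k, α k * ψ k t) * (x t - xb t) with hh0
  -- key pointwise inequality
  have key : ∀ᵐ t ∂μ, gtr t + h0 t ≤ ftr t := by
    filter_upwards [hmult, haefx, haegx] with t hm hfx hgx
    have h1 := gradIneq φ hbot hconv dphi hdphi (xb t) (x t) hgx hfx
    rw [hm, ← EReal.coe_sub, ← EReal.coe_mul] at h1
    have h2 := EReal.coe_le_coe_iff.mp h1
    simp only [hftr, hgtr, hh0]
    linarith
  -- integrability of h0 and its integral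
  have hh0eq : h0 = fun t => ∑ k, (α k * (x t * ψ k t) - α k * (xb t * ψ k t)) := by
    funext t
    rw [hh0]
    simp only
    rw [Finset.sum_mul]
    exact Finset.sum_congr rfl fun k _ => by ring
  have hI : Integrable h0 μ := by
    rw [hh0eq]
    exact integrable_finset_sum _ fun k _ => ((hxI k).const_mul (α k)).sub ((hbI k).const_mul (α k))
  have hInt0 : ∫ t, h0 t ∂μ = 0 := by
    simp only [hh0eq]
    have hsum := integral_finset_sum (μ := μ) Finset.univ
      (f := fun (k : Fin m) (t : T) => α k * (x t * ψ k t) - α k * (xb t * ψ k t))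
      (fun k _ => ((hxI k).const_mul (α k)).sub ((hbI k).const_mul (α k)))
    rw [hsum]
    refine Finset.sum_eq_zero fun k _ => ?_
    rw [integral_sub ((hxI k).const_mul (α k)) ((hbI k).const_mul (α k)),
      MeasureTheory.integral_const_mul, MeasureTheory.integral_const_mul, hxeq, hbeq, sub_self]
  -- lintegral identifications
  have e1 : (fun t => ENNReal.ofReal (gtr t)) =ᵐ[μ] fun t => epos (φ (xb t)) := by
    filter_upwards [haegx] with t ht; rw [epos_eq_ofReal ht]
  have e2 : (fun t => ENNReal.ofReal (-(gtr t))) =ᵐ[μ] fun t => epos (-(φ (xb t))) := by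
    filter_upwards [haegx] with t _
    rw [epos_eq_ofReal (by simp [EReal.neg_eq_top_iff, hbot]), EReal.toReal_neg_eq]
  have e3 : (fun t => ENNReal.ofReal (ftr t)) =ᵐ[μ] fun t => epos (φ (x t)) := by
    filter_upwards [haefx] with t ht; rw [epos_eq_ofReal ht]
  have e4 : (fun t => ENNReal.ofReal (-(ftr t))) =ᵐ[μ] fun t => epos (-(φ (x t))) := by
    filter_upwards [haefx] with t _
    rw [epos_eq_ofReal (by simp [EReal.neg_eq_top_iff, hbot]), EReal.toReal_neg_eq]
  -- integrability of gtr
  have hgtrm : Measurable gtr := measurable_ereal_toReal.comp hgm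
  have hgtrI : Integrable gtr μ := by
    refine ⟨hgtrm.aestronglyMeasurable, ?_⟩
    show (∫⁻ t, (‖gtr t‖₊ : ℝ≥0∞) ∂μ) < ⊤
    calc (∫⁻ t, (‖gtr t‖₊ : ℝ≥0∞) ∂μ)
        = ∫⁻ t, (ENNReal.ofReal (gtr t) + ENNReal.ofReal (-(gtr t))) ∂μ :=
          lintegral_congr fun t => ennnorm_eq _
      _ = (∫⁻ t, ENNReal.ofReal (gtr t) ∂μ) + ∫⁻ t, ENNReal.ofReal (-(gtr t)) ∂μ :=
          lintegral_add_left (ENNReal.measurable_ofReal.comp hgtrm) _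
      _ = (∫⁻ t, epos (φ (xb t)) ∂μ) + ∫⁻ t, epos (-(φ (xb t))) ∂μ := by
          rw [lintegral_congr_ae e1, lintegral_congr_ae e2]
      _ < ⊤ := ENNReal.add_lt_top.mpr ⟨hPb.lt_top, hNb.lt_top⟩
  -- N finite for x
  have hN : (∫⁻ t, epos (-(φ (x t))) ∂μ) ≠ ⊤ := by
    have hb : (∫⁻ t, epos (-(φ (x t))) ∂μ) ≤ ∫⁻ t, (‖gtr t + h0 t‖₊ : ℝ≥0∞) ∂μ := by
      rw [← lintegral_congr_ae e4]
      refine lintegral_mono_ae ?_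
      filter_upwards [key] with t ht
      rw [← enorm_eq_nnnorm, Real.enorm_eq_ofReal_abs]
      exact ENNReal.ofReal_le_ofReal (by cases abs_cases (gtr t + h0 t) <;> linarith)
    exact ne_top_of_le_ne_top (hgtrI.add hI).hasFiniteIntegral.ne hb
  -- integrability of ftr
  have hftrm : Measurable ftr := measurable_ereal_toReal.comp hfm
  have hftrI : Integrable ftr μ := by
    refine ⟨hftrm.aestronglyMeasurable, ?_⟩
    show (∫⁻ t, (‖ftr t‖₊ : ℝ≥0∞) ∂μ) < ⊤
    calc (∫⁻ t, (‖ftr t‖₊ : ℝ≥0∞) ∂μ)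
        = ∫⁻ t, (ENNReal.ofReal (ftr t) + ENNReal.ofReal (-(ftr t))) ∂μ :=
          lintegral_congr fun t => ennnorm_eq _
      _ = (∫⁻ t, ENNReal.ofReal (ftr t) ∂μ) + ∫⁻ t, ENNReal.ofReal (-(ftr t)) ∂μ :=
          lintegral_add_left (ENNReal.measurable_ofReal.comp hftrm) _
      _ = (∫⁻ t, epos (φ (x t)) ∂μ) + ∫⁻ t, epos (-(φ (x t))) ∂μ := by
          rw [lintegral_congr_ae e3, lintegral_congr_ae e4]
      _ < ⊤ := ENNReal.add_lt_top.mpr ⟨Ne.lt_top hP, hN.lt_top⟩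
  -- identify Phi values
  have hPhix : Phi μ φ x = ((∫ t, ftr t ∂μ : ℝ) : EReal) := by
    rw [Phi, eintegral, if_neg hP]
    rw [coe_ennreal_eq_coe _ hP, coe_ennreal_eq_coe _ hN, ← EReal.coe_sub,
      integral_eq_lintegral_pos_part_sub_lintegral_neg_part hftrI,
      lintegral_congr_ae e3, lintegral_congr_ae e4]
  have hPhixb : Phi μ φ xb = ((∫ t, gtr t ∂μ : ℝ) : EReal) := by
    rw [Phi, eintegral, if_neg hPb]
    rw [coe_ennreal_eq_coe _ hPb, coe_ennreal_eq_coe _ hNb, ← EReal.coe_sub,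
      integral_eq_lintegral_pos_part_sub_lintegral_neg_part hgtrI,
      lintegral_congr_ae e1, lintegral_congr_ae e2]
  rw [hPhix, hPhixb, EReal.coe_le_coe_iff]
  calc ∫ t, gtr t ∂μ = ∫ t, (gtr t + h0 t) ∂μ := by
        rw [integral_add hgtrI hI, hInt0, add_zero]
    _ ≤ ∫ t, ftr t ∂μ := integral_mono_ae (hgtrI.add hI) hftrI key
end

section
/- Boundary avoidance: suppose a := inf(dom φ) ∈ ℝ and φ'(a) := lim_{u→a⁺} φ'(u) = -∞, and suppose (P) has a feasible x̃ ∈ dom Φ with x̃(t) ∈ int(dom φ) for a.e. t. If x̄ is an optimal solution of (P) with Φ(x̄) ∈ ℝ, then μ({t : x̄(t) = a}) = 0. -/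
open MeasureTheory ENNReal Filter Set Topology

lemma epos_mono_s16 : Monotone epos := by
  intro x y hxy
  rcases eq_or_ne y ⊤ with rfl | hy
  · simp [epos_top]
  rcases eq_or_ne x ⊥ with rfl | hx
  · simp [epos]
  have hxt : x ≠ ⊤ := fun h => hy (top_le_iff.mp (h ▸ hxy))
  simp only [epos, if_neg hxt, if_neg hy]
  exact ENNReal.ofReal_le_ofReal (EReal.toReal_le_toReal hxy hx hy)

lemma ne_top_of_epos_ne_top {x : EReal} (h : epos x ≠ ⊤) : x ≠ ⊤ := by
  intro hx; rw [hx, epos_top] at h; exact h rfl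

lemma coe_ennreal_toReal_ereal {p : ℝ≥0∞} (h : p ≠ ⊤) : ((p.toReal : ℝ) : EReal) = (p : EReal) := by
  rw [← EReal.toReal_coe_ennreal]
  exact EReal.coe_toReal (by simp [h]) (by simp)

lemma ofReal_abs_le' (c : ℝ) : ENNReal.ofReal |c| ≤ ENNReal.ofReal c + ENNReal.ofReal (-c) := by
  rcases le_total 0 c with h | h
  · rw [abs_of_nonneg h]; exact le_self_add
  · rw [abs_of_nonpos h]; exact le_add_self

lemma eintegral_P_ne_top {T : Type*} [MeasurableSpace T] {μ : Measure T} {f : T → EReal}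
    (h : eintegral μ f ≠ ⊤) : (∫⁻ t, epos (f t) ∂μ) ≠ ⊤ := by
  intro hP; exact h (by rw [eintegral, if_pos hP])

lemma eintegral_N_ne_top {T : Type*} [MeasurableSpace T] {μ : Measure T} {f : T → EReal}
    (ht : eintegral μ f ≠ ⊤) (hb : eintegral μ f ≠ ⊥) : (∫⁻ t, epos (- f t) ∂μ) ≠ ⊤ := by
  intro hN
  apply hb
  rw [eintegral, if_neg (eintegral_P_ne_top ht), hN, EReal.coe_ennreal_top, EReal.sub_top]

lemma eintegral_ne_top {T : Type*} [MeasurableSpace T] {μ : Measure T} {f : T → EReal}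
    (hP : (∫⁻ t, epos (f t) ∂μ) ≠ ⊤) : eintegral μ f ≠ ⊤ := by
  rw [eintegral, if_neg hP]
  rcases eq_or_ne (∫⁻ t, epos (- f t) ∂μ) ⊤ with hN | hN
  · rw [hN, EReal.coe_ennreal_top, EReal.sub_top]; exact bot_ne_top
  · rw [← coe_ennreal_toReal_ereal hP, ← coe_ennreal_toReal_ereal hN, ← EReal.coe_sub]
    exact EReal.coe_ne_top _

/-- bridge: eintegral equals the Bochner integral of toReal when both parts are finite -/
lemma eintegral_real {T : Type*} [MeasurableSpace T] (μ : Measure T) (f : T → EReal)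
    (hm : Measurable f) (hb : ∀ t, f t ≠ ⊥)
    (ht : eintegral μ f ≠ ⊤) (hbb : eintegral μ f ≠ ⊥) :
    Integrable (fun t => (f t).toReal) μ ∧
      eintegral μ f = ((∫ t, (f t).toReal ∂μ : ℝ) : EReal) ∧ (∀ᵐ t ∂μ, f t ≠ ⊤) := by
  have hP := eintegral_P_ne_top ht
  have hN := eintegral_N_ne_top ht hbb
  have hmP : Measurable fun t => epos (f t) := measurable_epos.comp hm
  have haet : ∀ᵐ t ∂μ, f t ≠ ⊤ := by
    filter_upwards [ae_lt_top hmP hP] with t h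
    exact ne_top_of_epos_ne_top h.ne
  have heP : ∀ᵐ t ∂μ, epos (f t) = ENNReal.ofReal ((f t).toReal) := by
    filter_upwards [haet] with t h
    simp [epos, h]
  have heN : ∀ t, epos (-f t) = ENNReal.ofReal (-(f t).toReal) := by
    intro t
    have : (-f t) ≠ ⊤ := by simp [hb t]
    simp [epos, this, EReal.toReal_neg]
  have hmf : Measurable fun t => (f t).toReal := measurable_ereal_toReal.comp hm
  have hint : Integrable (fun t => (f t).toReal) μ := by
    refine ⟨hmf.aestronglyMeasurable, ?_⟩
    rw [hasFiniteIntegral_iff_norm]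
    have hle : ∀ᵐ t ∂μ, ENNReal.ofReal ‖(f t).toReal‖ ≤ epos (f t) + epos (-f t) := by
      filter_upwards [heP] with t h1
      rw [h1, heN t, Real.norm_eq_abs]
      exact ofReal_abs_le' _
    calc (∫⁻ t, ENNReal.ofReal ‖(f t).toReal‖ ∂μ) ≤ ∫⁻ t, (epos (f t) + epos (-f t)) ∂μ :=
          lintegral_mono_ae hle
      _ = (∫⁻ t, epos (f t) ∂μ) + ∫⁻ t, epos (-f t) ∂μ := lintegral_add_left hmP _
      _ < ⊤ := ENNReal.add_lt_top.mpr ⟨hP.lt_top, hN.lt_top⟩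
  refine ⟨hint, ?_, haet⟩
  rw [eintegral, if_neg hP]
  rw [integral_eq_lintegral_pos_part_sub_lintegral_neg_part hint]
  have hP' : (∫⁻ t, ENNReal.ofReal ((f t).toReal) ∂μ) = ∫⁻ t, epos (f t) ∂μ :=
    (lintegral_congr_ae heP).symm
  have hN' : (∫⁻ t, ENNReal.ofReal (-(f t).toReal) ∂μ) = ∫⁻ t, epos (-f t) ∂μ :=
    lintegral_congr fun t => (heN t).symm
  rw [EReal.coe_sub, hP', hN', coe_ennreal_toReal_ereal hP, coe_ennreal_toReal_ereal hN]

/-- Boundary avoidance: if `a = inf(dom φ) ∈ ℝ` with `φ'(a) = -∞`, and (P) has a feasible point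
`x̃ ∈ dom Φ` with values in `int(dom φ)` a.e., then any optimal solution `x̄` with
`Φ(x̄) ∈ ℝ` satisfies `x̄(t) ≠ a` a.e. -/
theorem stmt_16 {T : Type*} [MeasurableSpace T] (μ : Measure T) (φ : ℝ → EReal)
(hbot : ∀ u, φ u ≠ ⊥) (hproper : ∃ u, φ u ≠ ⊤) (hlsc : LowerSemicontinuous φ)
    (hconv : ∀ u v a b' : ℝ, 0 ≤ a → 0 ≤ b' → a + b' = 1 →
      φ (a * u + b' * v) ≤ (a : EReal) * φ u + (b' : EReal) * φ v)
    (hstrict : ∀ u v : ℝ, φ u ≠ ⊤ → φ v ≠ ⊤ → u ≠ v → ∀ a b' : ℝ, 0 < a → 0 < b' → a + b' = 1 →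
      φ (a * u + b' * v) < (a : EReal) * φ u + (b' : EReal) * φ v)
    (hint : (interior {u : ℝ | φ u ≠ ⊤}).Nonempty)
(dphi : ℝ → EReal)
    (hdphi : ∀ u v : ℝ, φ u ≠ ⊤ → φ v ≠ ⊤ →
      Tendsto (fun s : ℝ => ((((φ (u + s * (v - u))).toReal - (φ u).toReal) / s : ℝ) : EReal))
        (𝓝[>] (0 : ℝ)) (𝓝 (dphi u * ((v : EReal) - (u : EReal)))))
    (m : ℕ) (ψ : Fin m → T → ℝ) (hψ : ∀ k, Measurable (ψ k)) (b : Fin m → ℝ)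
    (X : Subspace ℝ (T → ℝ)) (hX : ∀ x ∈ X, Measurable x)
    (a : ℝ) (ha : IsGLB {u : ℝ | φ u ≠ ⊤} a) (hda : dphi a = ⊥)
    (xt : T → ℝ) (hxtX : xt ∈ X) (hxtF : xt ∈ Feas μ ψ b) (hxtdom : Phi μ φ xt < ⊤)
    (hxtint : ∀ᵐ t ∂μ, xt t ∈ interior {u : ℝ | φ u ≠ ⊤})
    (xb : T → ℝ) (hxbX : xb ∈ X) (hxbF : xb ∈ Feas μ ψ b)
    (hfin : ∃ r : ℝ, Phi μ φ xb = (r : EReal))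
    (hopt : ∀ x ∈ X, x ∈ Feas μ ψ b → Phi μ φ xb ≤ Phi μ φ x) :
    μ {t | xb t = a} = 0 := by
  classical
  by_contra hμS
  obtain ⟨r, hr⟩ := hfin
  simp only [Phi] at hr hxtdom hopt
  have hxbm : Measurable xb := hX xb hxbX
  have hxtm : Measurable xt := hX xt hxtX
  have hφm : Measurable φ := hlsc.measurable
  have hSm : MeasurableSet {t : T | xb t = a} := hxbm (measurableSet_singleton a)
  -- data for xb
  have hbtop : eintegral μ (fun t => φ (xb t)) ≠ ⊤ := by rw [hr]; exact EReal.coe_ne_top r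
  have hbbot : eintegral μ (fun t => φ (xb t)) ≠ ⊥ := by rw [hr]; exact EReal.coe_ne_bot r
  obtain ⟨hfb_int, hfb_eq, hfb_ae⟩ :=
    eintegral_real μ (fun t => φ (xb t)) (hφm.comp hxbm) (fun t => hbot _) hbtop hbbot
  have hrfb : (∫ t, (φ (xb t)).toReal ∂μ) = r :=
    (EReal.coe_eq_coe_iff.mp (hfb_eq.symm.trans hr))
  -- data for xt
  have htle : (r : EReal) ≤ eintegral μ (fun t => φ (xt t)) := by
    rw [← hr]; exact hopt xt hxtX hxtF
  have htbot : eintegral μ (fun t => φ (xt t)) ≠ ⊥ := by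
    intro h; rw [h] at htle; exact (EReal.coe_ne_bot r) (le_bot_iff.mp htle)
  obtain ⟨hft_int, hft_eq, hft_ae⟩ :=
    eintegral_real μ (fun t => φ (xt t)) (hφm.comp hxtm) (fun t => hbot _) hxtdom.ne htbot
  -- a.e. xt t > a
  have hgt : ∀ᵐ t ∂μ, a < xt t := by
    filter_upwards [hxtint] with t ht
    obtain ⟨ε, hε, hball⟩ := Metric.mem_nhds_iff.mp (mem_interior_iff_mem_nhds.mp ht)
    have h1 : xt t - ε / 2 ∈ {u : ℝ | φ u ≠ ⊤} := by
      apply hball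
      rw [Metric.mem_ball, Real.dist_eq, show xt t - ε / 2 - xt t = -(ε / 2) by ring, abs_neg,
        abs_of_pos (by linarith)]
      linarith
    have h2 : a ≤ xt t - ε / 2 := ha.1 h1
    linarith
  -- φ a is finite
  have hφa : φ a ≠ ⊤ := by
    intro hT
    apply hμS
    refine measure_mono_null ?_ (ae_iff.mp hfb_ae)
    intro t ht
    simp only [mem_setOf_eq] at ht ⊢
    rw [ht, hT]
    simp
  -- the sequence of convex combinations
  set lam : ℕ → ℝ := fun n => 1 / (n + 1) with hlam_def
  have hlam_pos : ∀ n, 0 < lam n := fun n => by positivity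
  have hlam_le : ∀ n, lam n ≤ 1 := by
    intro n
    rw [hlam_def]
    rw [div_le_one (by positivity)]
    simp
  set xs : ℕ → T → ℝ := fun n => xb + lam n • (xt - xb) with hxs_def
  have hxs_apply : ∀ n t, xs n t = xb t + lam n * (xt t - xb t) := fun n t => rfl
  have hxsX : ∀ n, xs n ∈ X := fun n => X.add_mem hxbX (X.smul_mem _ (X.sub_mem hxtX hxbX))
  have hxsm : ∀ n, Measurable (xs n) := fun n => hX _ (hxsX n)
  have hxsF : ∀ n, xs n ∈ Feas μ ψ b := by
    intro n
    have hrw : ∀ k, (fun t => xs n t * ψ k t) =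
        fun t => (1 - lam n) * (xb t * ψ k t) + lam n * (xt t * ψ k t) := by
      intro k; funext t; rw [hxs_apply]; ring
    refine ⟨hxsm n, fun k => ?_, fun k => ?_⟩
    · rw [hrw k]
      exact ((hxbF.2.1 k).const_mul _).add ((hxtF.2.1 k).const_mul _)
    · rw [hrw k, integral_add ((hxbF.2.1 k).const_mul _) ((hxtF.2.1 k).const_mul _),
        integral_const_mul, integral_const_mul, hxbF.2.2 k, hxtF.2.2 k]
      ring
  -- per-n key facts
  have key : ∀ n, Integrable (fun t => (φ (xs n t)).toReal) μ ∧
      r ≤ (∫ t, (φ (xs n t)).toReal ∂μ) ∧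
      (∀ᵐ t ∂μ, (φ (xs n t)).toReal ≤
        (1 - lam n) * (φ (xb t)).toReal + lam n * (φ (xt t)).toReal) := by
    intro n
    have hconv_ae : ∀ᵐ t ∂μ, φ (xs n t) ≤
        (((1 - lam n) * (φ (xb t)).toReal + lam n * (φ (xt t)).toReal : ℝ) : EReal) := by
      filter_upwards [hfb_ae, hft_ae] with t h1 h2
      have hcv := hconv (xb t) (xt t) (1 - lam n) (lam n)
        (by linarith [hlam_le n]) (hlam_pos n).le (by ring)
      have hxbe : φ (xb t) = (((φ (xb t)).toReal : ℝ) : EReal) :=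
        (EReal.coe_toReal h1 (hbot _)).symm
      have hxte : φ (xt t) = (((φ (xt t)).toReal : ℝ) : EReal) :=
        (EReal.coe_toReal h2 (hbot _)).symm
      have harg : (1 - lam n) * xb t + lam n * xt t = xs n t := by rw [hxs_apply]; ring
      rw [harg, hxbe, hxte] at hcv
      refine hcv.trans_eq ?_
      push_cast
      rfl
    have hu_int : Integrable
        (fun t => (1 - lam n) * (φ (xb t)).toReal + lam n * (φ (xt t)).toReal) μ :=
      (hfb_int.const_mul _).add (hft_int.const_mul _)
    have hPn : (∫⁻ t, epos (φ (xs n t)) ∂μ) ≠ ⊤ := by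
      have hle : (∫⁻ t, epos (φ (xs n t)) ∂μ) ≤
          ∫⁻ t, ‖(1 - lam n) * (φ (xb t)).toReal + lam n * (φ (xt t)).toReal‖₊ ∂μ := by
        refine lintegral_mono_ae ?_
        filter_upwards [hconv_ae] with t h
        calc epos (φ (xs n t)) ≤
            epos (((1 - lam n) * (φ (xb t)).toReal + lam n * (φ (xt t)).toReal : ℝ) : EReal) :=
              epos_mono_s16 h
          _ = ENNReal.ofReal ((1 - lam n) * (φ (xb t)).toReal + lam n * (φ (xt t)).toReal) :=
              epos_coe _
          _ ≤ ENNReal.ofReal (|(1 - lam n) * (φ (xb t)).toReal + lam n * (φ (xt t)).toReal|) :=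
              ENNReal.ofReal_le_ofReal (le_abs_self _)
          _ = _ := (Real.enorm_eq_ofReal_abs _).symm
      have hfi : (∫⁻ t, ‖(1 - lam n) * (φ (xb t)).toReal + lam n * (φ (xt t)).toReal‖₊ ∂μ) < ⊤ :=
        hu_int.2
      exact (hle.trans_lt hfi).ne
    have hopt_n : (r : EReal) ≤ eintegral μ (fun t => φ (xs n t)) := by
      rw [← hr]; exact hopt _ (hxsX n) (hxsF n)
    have hnbot : eintegral μ (fun t => φ (xs n t)) ≠ ⊥ := by
      intro h; rw [h] at hopt_n; exact (EReal.coe_ne_bot r) (le_bot_iff.mp hopt_n)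
    obtain ⟨hfn_int, hfn_eq, _⟩ := eintegral_real μ (fun t => φ (xs n t))
      (hφm.comp (hxsm n)) (fun t => hbot _) (eintegral_ne_top hPn) hnbot
    refine ⟨hfn_int, ?_, ?_⟩
    · rw [hfn_eq] at hopt_n; exact_mod_cast hopt_n
    · filter_upwards [hconv_ae] with t h
      have := EReal.toReal_le_toReal h (hbot _) (EReal.coe_ne_top _)
      rwa [EReal.toReal_coe] at this
  -- the functions g, q, h
  set g : T → ℝ := fun t => (φ (xt t)).toReal - (φ (xb t)).toReal with hg_def
  have hg_int : Integrable g μ := hft_int.sub hfb_int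
  have hg_meas : Measurable g :=
    (measurable_ereal_toReal.comp (hφm.comp hxtm)).sub
      (measurable_ereal_toReal.comp (hφm.comp hxbm))
  set q : ℕ → T → ℝ := fun n t => (n + 1) * ((φ (xs n t)).toReal - (φ (xb t)).toReal)
    with hq_def
  have hq_int : ∀ n, Integrable (q n) μ := fun n => (((key n).1).sub hfb_int).const_mul _
  have hq_meas : ∀ n, Measurable (q n) := fun n => measurable_const.mul
    ((measurable_ereal_toReal.comp (hφm.comp (hxsm n))).sub
      (measurable_ereal_toReal.comp (hφm.comp hxbm)))
  have hlam_mul : ∀ n : ℕ, ((n : ℝ) + 1) * lam n = 1 := by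
    intro n; rw [hlam_def]; field_simp
  have hq_le_g : ∀ n, ∀ᵐ t ∂μ, q n t ≤ g t := by
    intro n
    filter_upwards [(key n).2.2] with t h
    have h2 : (φ (xs n t)).toReal - (φ (xb t)).toReal ≤
        lam n * ((φ (xt t)).toReal - (φ (xb t)).toReal) := by nlinarith [hlam_pos n]
    calc q n t ≤ ((n : ℝ) + 1) * (lam n * ((φ (xt t)).toReal - (φ (xb t)).toReal)) := by
          rw [hq_def]
          exact mul_le_mul_of_nonneg_left h2 (by positivity)
      _ = g t := by rw [← mul_assoc, hlam_mul, one_mul]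
  have hq_nonneg : ∀ n, 0 ≤ ∫ t, q n t ∂μ := by
    intro n
    have heq : (∫ t, q n t ∂μ) =
        ((n : ℝ) + 1) * ((∫ t, (φ (xs n t)).toReal ∂μ) - r) := by
      rw [hq_def]
      rw [integral_const_mul, integral_sub (key n).1 hfb_int, hrfb]
    rw [heq]
    have h1 := (key n).2.1
    have : (0:ℝ) ≤ (n : ℝ) + 1 := by positivity
    nlinarith
  set C : ℝ := ∫ t in {t : T | xb t = a}ᶜ, g t ∂μ with hC_def
  have hqS : ∀ n, -C ≤ ∫ t in {t : T | xb t = a}, q n t ∂μ := by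
    intro n
    have hsplit := integral_add_compl hSm (hq_int n)
    have hcle : (∫ t in {t : T | xb t = a}ᶜ, q n t ∂μ) ≤ C :=
      integral_mono_ae ((hq_int n).integrableOn) (hg_int.integrableOn)
        (ae_restrict_of_ae (hq_le_g n))
    have := hq_nonneg n
    linarith
  have hh_int : ∀ n, Integrable (fun t => g t - q n t) μ := fun n =>
    (hg_int.sub (hq_int n)).congr (Eventually.of_forall fun t => rfl)
  have hh_meas : ∀ n, Measurable (fun t => ENNReal.ofReal (g t - q n t)) := fun n =>
    ENNReal.measurable_ofReal.comp (hg_meas.sub (hq_meas n))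
  have hh_nonneg : ∀ n, 0 ≤ᵐ[μ.restrict {t : T | xb t = a}] fun t => g t - q n t := fun n =>
    ae_restrict_of_ae (by
      filter_upwards [hq_le_g n] with t ht
      simp only [Pi.zero_apply]
      linarith)
  have hh_bound : ∀ n, (∫⁻ t in {t : T | xb t = a}, ENNReal.ofReal (g t - q n t) ∂μ) ≤
      ENNReal.ofReal ((∫ t in {t : T | xb t = a}, g t ∂μ) + C) := by
    intro n
    rw [← ofReal_integral_eq_lintegral_ofReal ((hh_int n).integrableOn) (hh_nonneg n)]
    apply ENNReal.ofReal_le_ofReal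
    rw [integral_sub hg_int.integrableOn (hq_int n).integrableOn]
    have := hqS n
    linarith
  -- divergence a.e. on S
  have hdiv : ∀ᵐ t ∂μ.restrict {t : T | xb t = a},
      Tendsto (fun n => g t - q n t) atTop atTop := by
    filter_upwards [ae_restrict_mem hSm, ae_restrict_of_ae hgt, ae_restrict_of_ae hft_ae]
      with t htS hta htne
    have hd := hdphi a (xt t) hφa htne
    have hpos : (0 : EReal) < ((xt t : ℝ) : EReal) - ((a : ℝ) : EReal) := by
      rw [← EReal.coe_sub]
      exact_mod_cast sub_pos.mpr hta
    rw [hda, EReal.bot_mul_of_pos hpos] at hd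
    have hlam_t : Tendsto lam atTop (𝓝[>] (0 : ℝ)) :=
      tendsto_nhdsWithin_iff.mpr ⟨tendsto_one_div_add_atTop_nhds_zero_nat,
        Eventually.of_forall fun n => hlam_pos n⟩
    have h2 := hd.comp hlam_t
    have hqform : ∀ n, ((φ (a + lam n * (xt t - a))).toReal - (φ a).toReal) / lam n = q n t := by
      intro n
      have h1 : a + lam n * (xt t - a) = xs n t := by rw [hxs_apply, htS]
      have h2 : (φ (xb t)).toReal = (φ a).toReal := by rw [htS]
      simp only [hq_def]
      rw [h1, h2]
      simp only [hlam_def]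
      have hne : ((n : ℝ) + 1) ≠ 0 := by positivity
      field_simp
    have h3 : Tendsto (fun n => q n t) atTop atBot := by
      rw [tendsto_atBot]
      intro x
      rw [EReal.tendsto_nhds_bot_iff_real] at h2
      filter_upwards [h2 x] with n hn
      simp only [Function.comp] at hn
      rw [hqform n] at hn
      exact_mod_cast hn.le
    have h4 : Tendsto (fun n => -(q n t)) atTop atTop := tendsto_neg_atTop_iff.mpr h3
    have h5 := tendsto_atTop_add_const_left atTop (g t) h4
    refine h5.congr fun n => ?_
    ring
  have hliminf : ∀ᵐ t ∂μ.restrict {t : T | xb t = a},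
      liminf (fun n => ENNReal.ofReal (g t - q n t)) atTop = ⊤ := by
    filter_upwards [hdiv] with t ht
    exact (ENNReal.tendsto_ofReal_atTop.comp ht).liminf_eq
  have hFatou := lintegral_liminf_le (μ := μ.restrict {t : T | xb t = a}) (u := atTop) hh_meas
  have hleft : (∫⁻ t in {t : T | xb t = a},
      liminf (fun n => ENNReal.ofReal (g t - q n t)) atTop ∂μ) = ⊤ := by
    rw [lintegral_congr_ae hliminf, lintegral_const, Measure.restrict_apply_univ]
    exact ENNReal.top_mul hμS
  rw [hleft] at hFatou
  have hright : liminf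
      (fun n => ∫⁻ t in {t : T | xb t = a}, ENNReal.ofReal (g t - q n t) ∂μ) atTop ≤
      ENNReal.ofReal ((∫ t in {t : T | xb t = a}, g t ∂μ) + C) := by
    calc liminf (fun n => ∫⁻ t in {t : T | xb t = a}, ENNReal.ofReal (g t - q n t) ∂μ) atTop ≤
        liminf (fun _ : ℕ => ENNReal.ofReal ((∫ t in {t : T | xb t = a}, g t ∂μ) + C)) atTop :=
          liminf_le_liminf (Eventually.of_forall hh_bound)
      _ = _ := liminf_const _
  exact ENNReal.ofReal_ne_top (top_le_iff.mp (hFatou.trans hright))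
end

section
/- Let μ be σ-finite and let Y be a linear space of measurable functions satisfying condition (H): for every A ∈ A with 0 < μ(A) < ∞ there exists a measurable u with u > 0 a.e. and u·χ_A ∈ Y. If ȳ is measurable (extended-real valued) and ∫_T ȳ·u dμ = 0 for every u ∈ Y, then ȳ = 0 almost everywhere. -/
open MeasureTheory ENNReal Filter Set Topology

lemma epos_eq_zero_iff {a : EReal} : epos a = 0 ↔ a ≤ 0 := by
  unfold epos
  induction a using EReal.rec with
  | bot => simp
  | coe x =>
    simp only [EReal.coe_ne_top, if_false, ENNReal.ofReal_eq_zero, EReal.toReal_coe]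
    exact_mod_cast Iff.rfl
  | top => simp

lemma ofReal_le_epos {c : ℝ} {a : EReal} (h : (c : EReal) ≤ a) :
    ENNReal.ofReal c ≤ epos a := by
  unfold epos
  split_ifs with ha
  · exact le_top
  · have hb : a ≠ ⊥ := by
      intro hbot
      rw [hbot, le_bot_iff] at h
      exact (EReal.coe_ne_bot c) h
    refine ENNReal.ofReal_le_ofReal ?_
    have := EReal.toReal_le_toReal h (EReal.coe_ne_bot c) ha
    simpa using this

lemma eintegral_eq_zero_aux {T : Type*} [MeasurableSpace T] {μ : Measure T} {f : T → EReal}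
    (h : eintegral μ f = 0) :
    (∫⁻ t, epos (f t) ∂μ) = (∫⁻ t, epos (- f t) ∂μ) ∧ (∫⁻ t, epos (f t) ∂μ) ≠ ⊤ := by
  unfold eintegral at h
  split_ifs at h with hP
  · exact absurd h (by simp)
  set P := ∫⁻ t, epos (f t) ∂μ
  set N := ∫⁻ t, epos (- f t) ∂μ
  by_cases hN : N = ⊤
  · rw [hN, EReal.coe_ennreal_top, EReal.sub_top] at h
    exact absurd h (by simp)
  · lift P to NNReal using hP with p
    lift N to NNReal using hN with n
    rw [EReal.coe_nnreal_eq_coe_real, EReal.coe_nnreal_eq_coe_real, ← EReal.coe_sub,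
      EReal.coe_eq_zero, sub_eq_zero] at h
    exact ⟨by exact_mod_cast h, by simp⟩

lemma eintegral_neg_eq_zero {T : Type*} [MeasurableSpace T] {μ : Measure T} {f : T → EReal}
    (h : eintegral μ f = 0) : eintegral μ (fun t => - f t) = 0 := by
  obtain ⟨hPN, hP⟩ := eintegral_eq_zero_aux h
  have hNN : (∫⁻ t, epos (- (- f t)) ∂μ) = ∫⁻ t, epos (f t) ∂μ := by
    simp only [neg_neg]
  unfold eintegral
  rw [hNN, ← hPN, if_neg (hPN ▸ hP)]
  obtain ⟨p, hp⟩ : ∃ p : NNReal, (∫⁻ t, epos (f t) ∂μ) = p :=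
    ⟨(∫⁻ t, epos (f t) ∂μ).toNNReal, (ENNReal.coe_toNNReal hP).symm⟩
  rw [hp, EReal.coe_nnreal_eq_coe_real, ← EReal.coe_sub, EReal.coe_eq_zero, sub_self]

/-- The positive set of `yb` is null. -/
lemma pos_set_null {T : Type*} [MeasurableSpace T] (μ : Measure T) [SigmaFinite μ]
    (Y : Subspace ℝ (T → ℝ))
    (hH : ∀ A : Set T, MeasurableSet A → 0 < μ A → μ A < ⊤ →
      ∃ u : T → ℝ, Measurable u ∧ (∀ᵐ t ∂μ, 0 < u t) ∧ A.indicator u ∈ Y)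
    (yb : T → EReal) (hyb : Measurable yb)
    (hzero : ∀ u ∈ Y, eintegral μ (fun t => yb t * ((u t : ℝ) : EReal)) = 0) :
    μ {t | 0 < yb t} = 0 := by
  by_contra hA
  have hAmeas : MeasurableSet {t | 0 < yb t} := measurableSet_lt measurable_const hyb
  obtain ⟨B, hBmeas, hBsub, hBpos, hBfin⟩ :=
    MeasureTheory.Measure.exists_subset_measure_lt_top hAmeas (pos_iff_ne_zero.mpr hA)
  obtain ⟨u, hu_meas, hu_pos, huY⟩ := hH B hBmeas hBpos hBfin
  set f : T → EReal := fun t => yb t * ((B.indicator u t : ℝ) : EReal) with hf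
  have h0 := hzero _ huY
  obtain ⟨hPN, hPtop⟩ := eintegral_eq_zero_aux h0
  -- f ≥ 0 a.e., hence the negative part integral vanishes
  have hfnn : ∀ᵐ t ∂μ, 0 ≤ f t := by
    filter_upwards [hu_pos] with t ht
    by_cases htB : t ∈ B
    · have h1 : (0 : EReal) < yb t := hBsub htB
      have h2 : (0 : EReal) < ((B.indicator u t : ℝ) : EReal) := by
        rw [Set.indicator_of_mem htB]; exact_mod_cast ht
      exact le_of_lt (EReal.mul_pos h1 h2)
    · simp [hf, Set.indicator_of_notMem htB]
  have hN : (∫⁻ t, epos (- f t) ∂μ) = 0 := by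
    have : (fun t => epos (- f t)) =ᵐ[μ] 0 := by
      filter_upwards [hfnn] with t ht
      show epos (- f t) = 0
      rw [epos_eq_zero_iff]
      exact EReal.neg_le.mpr (by rw [neg_zero]; exact ht)
    rw [lintegral_congr_ae this]
    simp
  have hP : (∫⁻ t, epos (f t) ∂μ) = 0 := by rw [hPN, hN]
  -- slice sets
  set S : ℕ → Set T := fun n =>
    B ∩ {t | ((1 / (n + 1) : ℝ) : EReal) < yb t} ∩ {t | (1 / (n + 1) : ℝ) < u t} with hS
  have hSmeas : ∀ n, MeasurableSet (S n) := fun n =>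
    ((hBmeas.inter (measurableSet_lt measurable_const hyb)).inter
      (measurableSet_lt measurable_const hu_meas))
  -- each S n is null, since the integral of epos ∘ f is 0
  have hSnull : ∀ n, μ (S n) = 0 := by
    intro n
    by_contra hSn
    set c : ℝ := 1 / (n + 1 : ℝ) with hc
    have hcpos : 0 < c := by positivity
    have hk : (S n).indicator (fun _ => ENNReal.ofReal (c * c)) ≤ fun t => epos (f t) := by
      intro t
      by_cases htS : t ∈ S n
      · rw [Set.indicator_of_mem htS]
        obtain ⟨⟨htB, hty⟩, htu⟩ := htS
        have hcy : (c : EReal) ≤ yb t := le_of_lt hty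
        have hcu : (c : EReal) ≤ ((B.indicator u t : ℝ) : EReal) := by
          rw [Set.indicator_of_mem htB]; exact_mod_cast le_of_lt htu
        have h0c : (0 : EReal) ≤ (c : EReal) := by exact_mod_cast hcpos.le
        have h0y : (0 : EReal) ≤ yb t := h0c.trans hcy
        have hcc : ((c * c : ℝ) : EReal) ≤ f t := by
          rw [EReal.coe_mul]
          calc (c : EReal) * (c : EReal) ≤ yb t * (c : EReal) :=
                mul_le_mul_of_nonneg_right hcy h0c
            _ ≤ yb t * ((B.indicator u t : ℝ) : EReal) :=
                mul_le_mul_of_nonneg_left hcu h0y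
        exact ofReal_le_epos hcc
      · rw [Set.indicator_of_notMem htS]; exact zero_le
    have hbound : ENNReal.ofReal (c * c) * μ (S n) ≤ ∫⁻ t, epos (f t) ∂μ := by
      calc ENNReal.ofReal (c * c) * μ (S n)
          = ∫⁻ t, (S n).indicator (fun _ => ENNReal.ofReal (c * c)) t ∂μ := by
            rw [lintegral_indicator_const (hSmeas n)]
        _ ≤ ∫⁻ t, epos (f t) ∂μ := lintegral_mono hk
    rw [hP, nonpos_iff_eq_zero, mul_eq_zero] at hbound
    rcases hbound with h | h
    · rw [ENNReal.ofReal_eq_zero] at h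
      nlinarith
    · exact hSn h
  -- a.e. every point of B lies in some S n
  have hcover : ∀ᵐ t ∂μ, t ∉ B := by
    have hU : μ (⋃ n, S n) = 0 := measure_iUnion_null hSnull
    have hUae : ∀ᵐ t ∂μ, t ∉ ⋃ n, S n := by
      rw [ae_iff]
      simp only [not_not, Set.setOf_mem_eq]
      exact hU
    filter_upwards [hu_pos, hUae] with t htu htU htB
    apply htU
    rw [Set.mem_iUnion]
    -- find n for yb t
    have hty : (0 : EReal) < yb t := hBsub htB
    have hn1 : ∃ n : ℕ, ((1 / (n + 1) : ℝ) : EReal) < yb t := by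
      rcases eq_or_ne (yb t) ⊤ with h | h
      · exact ⟨0, h ▸ EReal.coe_lt_top _⟩
      · obtain ⟨x, hx⟩ : ∃ x : ℝ, yb t = (x : EReal) :=
          ⟨(yb t).toReal, (EReal.coe_toReal h (ne_bot_of_gt hty)).symm⟩
        have hxpos : (0 : ℝ) < x := by
          rw [hx] at hty; exact_mod_cast hty
        obtain ⟨n, hn⟩ := exists_nat_one_div_lt hxpos
        exact ⟨n, by rw [hx]; exact_mod_cast hn⟩
    obtain ⟨n₁, hn₁⟩ := hn1
    obtain ⟨n₂, hn₂⟩ := exists_nat_one_div_lt htu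
    refine ⟨max n₁ n₂, ⟨htB, ?_⟩, ?_⟩
    · refine lt_of_le_of_lt ?_ hn₁
      have hm : (n₁ : ℝ) ≤ ((max n₁ n₂ : ℕ) : ℝ) := by exact_mod_cast le_max_left n₁ n₂
      have : (1 / ((max n₁ n₂ : ℕ) + 1 : ℝ)) ≤ 1 / (n₁ + 1 : ℝ) :=
        one_div_le_one_div_of_le (by positivity) (by linarith)
      exact_mod_cast this
    · refine lt_of_le_of_lt ?_ hn₂
      have hm : (n₂ : ℝ) ≤ ((max n₁ n₂ : ℕ) : ℝ) := by exact_mod_cast le_max_right n₁ n₂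
      exact one_div_le_one_div_of_le (by positivity) (by linarith)
  have hB0 : μ B = 0 := by
    rw [ae_iff] at hcover
    simpa [Set.setOf_mem_eq] using hcover
  exact absurd hB0 hBpos.ne'

/-- If `μ` is σ-finite and the linear space `Y` of measurable functions satisfies condition (H)
(for every `A` of finite positive measure there is a measurable `u > 0` a.e. with `u·χ_A ∈ Y`),
then any measurable extended-real `ȳ` with `∫ ȳ·u dμ = 0` for all `u ∈ Y` vanishes a.e. -/
theorem stmt_17 {T : Type*} [MeasurableSpace T] (μ : Measure T) [SigmaFinite μ]
    (Y : Subspace ℝ (T → ℝ)) (hYmeas : ∀ u ∈ Y, Measurable u)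
    (hH : ∀ A : Set T, MeasurableSet A → 0 < μ A → μ A < ⊤ →
      ∃ u : T → ℝ, Measurable u ∧ (∀ᵐ t ∂μ, 0 < u t) ∧ A.indicator u ∈ Y)
    (yb : T → EReal) (hyb : Measurable yb)
    (hzero : ∀ u ∈ Y, eintegral μ (fun t => yb t * ((u t : ℝ) : EReal)) = 0) :
    ∀ᵐ t ∂μ, yb t = 0 := by
  have hpos := pos_set_null μ Y hH yb hyb hzero
  have hneg : μ {t | yb t < 0} = 0 := by
    have hzero' : ∀ u ∈ Y, eintegral μ (fun t => (-yb t) * ((u t : ℝ) : EReal)) = 0 := by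
      intro u hu
      have := eintegral_neg_eq_zero (hzero u hu)
      simpa only [EReal.neg_mul] using this
    have := pos_set_null μ Y hH (fun t => - yb t) hyb.neg hzero'
    have hset : {t | (0 : EReal) < - yb t} = {t | yb t < 0} := by
      ext t
      simp only [Set.mem_setOf_eq]
      conv_lhs => rw [← neg_zero]
      exact EReal.neg_lt_neg_iff
    rwa [hset] at this
  rw [ae_iff]
  have : {t | ¬ yb t = 0} ⊆ {t | 0 < yb t} ∪ {t | yb t < 0} := by
    intro t ht
    rcases lt_or_gt_of_ne (Ne.symm ht) with h | h
    · exact Or.inl h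
    · exact Or.inr h
  exact measure_mono_null this (measure_union_null hpos hneg)
end
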